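/- arXiv:2601.09245 — 8 statements merged into one kernel-verified Lean document; each statement's English description precedes it below -/
import Mathlib

section
/- For N > 0 and n \ge 0, the isotropic function S^n(N,N,N) (with polynomial weights x,y,z) satisfies the four-term relation: n \cdot S^n(N,N,N) = N \cdot ( S^n(N+1,N,N) + S^n(N,N+1,N) + S^n(N,N,N+1) - 3 S^n(N,N,N) ). -/
/-- The binomial coefficient `C(k+N-1, N-1)`, with the convention (from the binomial
series) that for `N = 0` it is the indicator of `k = 0`. -/
def Scoef (N k : ℕ) : ℕ := (k + N - 1).choose k

/-- `S^n(N_x,N_y,N_z) = ∑_{n_x+n_y+n_z=n} C(n_x+N_x-1,N_x-1) C(n_y+N_y-1,N_y-1)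
C(n_z+N_z-1,N_z-1) x^{n_x} y^{n_y} z^{n_z}`. -/
def Spoly {R : Type*} [CommRing R] (x y z : R) (n Nx Ny Nz : ℕ) : R :=
  ∑ a ∈ Finset.range (n + 1), ∑ b ∈ Finset.range (n + 1 - a),
    (Scoef Nx a : R) * (Scoef Ny b : R) * (Scoef Nz (n - a - b) : R)
      * x ^ a * y ^ b * z ^ (n - a - b)

lemma Scoef_key (N k : ℕ) (hN : 0 < N) :
    N * Scoef (N + 1) k = (N + k) * Scoef N k := by
  obtain ⟨M, rfl⟩ : ∃ M, N = M + 1 := ⟨N - 1, by omega⟩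
  unfold Scoef
  have h1 : k + (M + 1 + 1) - 1 = k + M + 1 := by omega
  have h2 : k + (M + 1) - 1 = k + M := by omega
  rw [h1, h2, ← Nat.choose_symm (show k ≤ k + M + 1 by omega), ← Nat.choose_symm (show k ≤ k + M by omega)]
  have h3 : k + M + 1 - k = M + 1 := by omega
  have h4 : k + M - k = M := by omega
  rw [h3, h4]
  have := Nat.add_one_mul_choose_eq (k + M) M
  calc (M + 1) * (k + M + 1).choose (M + 1)
      = (k + M + 1).choose (M + 1) * (M + 1) := by ring
    _ = (k + M + 1) * (k + M).choose M := this.symm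
    _ = (M + 1 + k) * (k + M).choose M := by ring_nf

/-- Four-term relation for the isotropic case: for `N > 0`,
`n S^n(N,N,N) = N (S^n(N+1,N,N) + S^n(N,N+1,N) + S^n(N,N,N+1) - 3 S^n(N,N,N))`. -/
theorem stmt4 {R : Type*} [CommRing R] (x y z : R) (n N : ℕ) (hN : 0 < N) :
    (n : R) * Spoly x y z n N N N =
      (N : R) * (Spoly x y z n (N + 1) N N + Spoly x y z n N (N + 1) N +
        Spoly x y z n N N (N + 1) - 3 * Spoly x y z n N N N) := by
  simp only [Spoly, Finset.mul_sum, ← Finset.sum_add_distrib, ← Finset.sum_sub_distrib]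
  apply Finset.sum_congr rfl
  intro a ha
  apply Finset.sum_congr rfl
  intro b hb
  simp only [Finset.mem_range] at ha hb
  set c := n - a - b with hc
  have hn : (n : R) = (a : R) + b + c := by
    have : n = a + b + c := by omega
    rw [this]; push_cast; ring
  have k1 : (N : R) * Scoef (N + 1) a = ((N : R) + a) * Scoef N a := by
    have := Scoef_key N a hN; exact_mod_cast congrArg (Nat.cast : ℕ → R) this
  have k2 : (N : R) * Scoef (N + 1) b = ((N : R) + b) * Scoef N b := by
    have := Scoef_key N b hN; exact_mod_cast congrArg (Nat.cast : ℕ → R) this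
  have k3 : (N : R) * Scoef (N + 1) c = ((N : R) + c) * Scoef N c := by
    have := Scoef_key N c hN; exact_mod_cast congrArg (Nat.cast : ℕ → R) this
  rw [hn]
  linear_combination (-(Scoef N b * Scoef N c * x ^ a * y ^ b * z ^ c : R)) * k1 -
    (Scoef N a * Scoef N c * x ^ a * y ^ b * z ^ c : R) * k2 -
    (Scoef N a * Scoef N b * x ^ a * y ^ b * z ^ c : R) * k3
end

section
/- For n > 0, one has the vanishing identity 4 S^n(n,n,n) - S^n(n+1,n,n) - S^n(n,n+1,n) - S^n(n,n,n+1) = 0, as polynomials in x, y, z. -/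
lemma key (n a : ℕ) (hn : 0 < n) : n * Scoef (n + 1) a = (a + n) * Scoef n a := by
  obtain ⟨m, rfl⟩ : ∃ m, n = m + 1 := ⟨n - 1, by omega⟩
  simp only [Scoef]
  have h1 : a + (m + 1) - 1 = a + m := by omega
  have h2 : a + (m + 1 + 1) - 1 = a + m + 1 := by omega
  rw [h1, h2]
  have h3 : (a + m).choose a = (a + m).choose m := by
    have h := Nat.choose_symm (show m ≤ a + m by omega)
    rwa [show a + m - m = a by omega] at h
  have h4 : (a + m + 1).choose a = (a + m + 1).choose (m + 1) := by
    have h := Nat.choose_symm (show m + 1 ≤ a + m + 1 by omega)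
    rwa [show a + m + 1 - (m + 1) = a by omega] at h
  rw [h3, h4]
  calc (m + 1) * (a + m + 1).choose (m + 1)
      = (a + m + 1).choose (m + 1) * (m + 1) := mul_comm _ _
    _ = (a + m).succ * (a + m).choose m := (Nat.add_one_mul_choose_eq (a + m) m).symm
    _ = (a + m + 1) * (a + m).choose m := rfl

lemma coeff_id (n a b : ℕ) (hn : 0 < n) (hab : a + b ≤ n) :
    4 * (Scoef n a * Scoef n b * Scoef n (n - a - b)) =
      Scoef (n + 1) a * Scoef n b * Scoef n (n - a - b) +
      Scoef n a * Scoef (n + 1) b * Scoef n (n - a - b) +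
      Scoef n a * Scoef n b * Scoef (n + 1) (n - a - b) := by
  obtain ⟨c, hc⟩ : ∃ c, n - a - b = c := ⟨n - a - b, rfl⟩
  have habc : a + b + c = n := by omega
  rw [hc]
  apply Nat.eq_of_mul_eq_mul_left hn
  have k1 := key n a hn
  have k2 := key n b hn
  have k3 := key n c hn
  zify at k1 k2 k3 habc ⊢
  linear_combination (-((Scoef n b : ℤ) * Scoef n c)) * k1 -
    ((Scoef n a : ℤ) * Scoef n c) * k2 - ((Scoef n a : ℤ) * Scoef n b) * k3 -
    ((Scoef n a : ℤ) * Scoef n b * Scoef n c) * habc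

/-- Vanishing identity: for `n > 0`,
`4 S^n(n,n,n) - S^n(n+1,n,n) - S^n(n,n+1,n) - S^n(n,n,n+1) = 0`. -/
theorem stmt5 {R : Type*} [CommRing R] (x y z : R) (n : ℕ) (hn : 0 < n) :
    4 * Spoly x y z n n n n - Spoly x y z n (n + 1) n n -
      Spoly x y z n n (n + 1) n - Spoly x y z n n n (n + 1) = 0 := by
  have h : 4 * Spoly x y z n n n n =
      Spoly x y z n (n + 1) n n + Spoly x y z n n (n + 1) n + Spoly x y z n n n (n + 1) := by
    unfold Spoly
    rw [Finset.mul_sum, ← Finset.sum_add_distrib, ← Finset.sum_add_distrib]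
    refine Finset.sum_congr rfl fun a ha => ?_
    rw [Finset.mul_sum, ← Finset.sum_add_distrib, ← Finset.sum_add_distrib]
    refine Finset.sum_congr rfl fun b hb => ?_
    have ha' : a ≤ n := by simpa [Nat.lt_succ_iff] using Finset.mem_range.mp ha
    have hb' : a + b ≤ n := by
      have := Finset.mem_range.mp hb; omega
    have hc := congrArg (Nat.cast : ℕ → R) (coeff_id n a b hn hb')
    push_cast at hc
    linear_combination (x ^ a * y ^ b * z ^ (n - a - b)) * hc
  linear_combination h
end

section
/- For N_x \ge 1, the polynomial R^n(N_x,N_y,N_z) satisfies the recurrence R^n(N_x, N_y, N_z) = R^n(N_x - 1, N_y, N_z) + x \cdot R^{n-1}(N_x + 1, N_y + 1, N_z + 1) for all n \ge 1. -/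
/-- `R^n(N_x,N_y,N_z) = 4 S^n(N_x+n,N_y+n,N_z+n) - S^n(N_x+n+1,N_y+n,N_z+n)
- S^n(N_x+n,N_y+n+1,N_z+n) - S^n(N_x+n,N_y+n,N_z+n+1)`. -/
def Rpoly {R : Type*} [CommRing R] (x y z : R) (n Nx Ny Nz : ℕ) : R :=
  4 * Spoly x y z n (Nx + n) (Ny + n) (Nz + n)
    - Spoly x y z n (Nx + n + 1) (Ny + n) (Nz + n)
    - Spoly x y z n (Nx + n) (Ny + n + 1) (Nz + n)
    - Spoly x y z n (Nx + n) (Ny + n) (Nz + n + 1)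

/-- Pascal's rule for `Scoef`. -/
lemma Scoef_succ (M k : ℕ) : Scoef (M + 1) (k + 1) = Scoef M (k + 1) + Scoef (M + 1) k := by
  unfold Scoef
  have h1 : k + 1 + (M + 1) - 1 = (k + M) + 1 := by omega
  have h2 : k + 1 + M - 1 = k + M := by omega
  have h3 : k + (M + 1) - 1 = k + M := by omega
  rw [h1, h2, h3, Nat.choose_succ_succ]
  simp [Nat.succ_eq_add_one]
  omega

/-- Recurrence for `Spoly` in the first slot. -/
lemma Spoly_rec {R : Type*} [CommRing R] (x y z : R) (m M Ny Nz : ℕ) :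
    Spoly x y z (m + 1) (M + 1) Ny Nz =
      Spoly x y z (m + 1) M Ny Nz + x * Spoly x y z m (M + 1) Ny Nz := by
  unfold Spoly
  rw [Finset.sum_range_succ' (fun a => ∑ b ∈ Finset.range (m + 1 + 1 - a),
    (Scoef (M+1) a : R) * (Scoef Ny b : R) * (Scoef Nz (m + 1 - a - b) : R)
      * x ^ a * y ^ b * z ^ (m + 1 - a - b)) (m+1),
    Finset.sum_range_succ' (fun a => ∑ b ∈ Finset.range (m + 1 + 1 - a),
    (Scoef M a : R) * (Scoef Ny b : R) * (Scoef Nz (m + 1 - a - b) : R)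
      * x ^ a * y ^ b * z ^ (m + 1 - a - b)) (m+1)]
  have key : ∀ a ∈ Finset.range (m+1),
      (∑ b ∈ Finset.range (m + 1 + 1 - (a+1)),
        (Scoef (M+1) (a+1) : R) * (Scoef Ny b : R) * (Scoef Nz (m + 1 - (a+1) - b) : R)
          * x ^ (a+1) * y ^ b * z ^ (m + 1 - (a+1) - b)) =
      (∑ b ∈ Finset.range (m + 1 + 1 - (a+1)),
        (Scoef M (a+1) : R) * (Scoef Ny b : R) * (Scoef Nz (m + 1 - (a+1) - b) : R)
          * x ^ (a+1) * y ^ b * z ^ (m + 1 - (a+1) - b)) +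
      x * ∑ b ∈ Finset.range (m + 1 - a),
        (Scoef (M+1) a : R) * (Scoef Ny b : R) * (Scoef Nz (m - a - b) : R)
          * x ^ a * y ^ b * z ^ (m - a - b) := by
    intro a _
    have hr : m + 1 + 1 - (a+1) = m + 1 - a := by omega
    rw [hr, Finset.mul_sum, ← Finset.sum_add_distrib]
    apply Finset.sum_congr rfl
    intro b _
    have he : m + 1 - (a+1) - b = m - a - b := by omega
    rw [he, Scoef_succ]
    push_cast
    ring
  rw [Finset.sum_congr rfl key, Finset.sum_add_distrib, Finset.mul_sum]
  have h0 : ∀ N : ℕ, (Scoef N 0 : R) = 1 := by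
    intro N; unfold Scoef; simp
  simp only [h0]
  ring

/-- Recurrence: for `N_x ≥ 1` and `n ≥ 1`,
`R^n(N_x,N_y,N_z) = R^n(N_x-1,N_y,N_z) + x R^{n-1}(N_x+1,N_y+1,N_z+1)`. -/
theorem stmt7 {R : Type*} [CommRing R] (x y z : R)
    (n Nx Ny Nz : ℕ) (hn : 1 ≤ n) (hNx : 1 ≤ Nx) :
    Rpoly x y z n Nx Ny Nz =
      Rpoly x y z n (Nx - 1) Ny Nz +
        x * Rpoly x y z (n - 1) (Nx + 1) (Ny + 1) (Nz + 1) := by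
  obtain ⟨m, rfl⟩ : ∃ m, n = m + 1 := ⟨n - 1, by omega⟩
  obtain ⟨K, rfl⟩ : ∃ K, Nx = K + 1 := ⟨Nx - 1, by omega⟩
  simp only [Nat.add_sub_cancel]
  unfold Rpoly
  simp only [show K + 1 + (m + 1) = (K + m + 1) + 1 from by ring,
    show K + 1 + (m + 1) + 1 = (K + m + 2) + 1 from by ring,
    show K + (m + 1) = K + m + 1 from by ring,
    show K + (m + 1) + 1 = (K + m + 1) + 1 from by ring,
    show K + 1 + 1 + m = (K + m + 1) + 1 from by ring,
    show K + 1 + 1 + m + 1 = (K + m + 2) + 1 from by ring,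
    show Ny + 1 + m = Ny + (m + 1) from by ring,
    show Nz + 1 + m = Nz + (m + 1) from by ring,
    show Ny + 1 + m + 1 = Ny + (m + 1) + 1 from by ring,
    show Nz + 1 + m + 1 = Nz + (m + 1) + 1 from by ring]
  simp only [Spoly_rec x y z m]
  ring
end

section
/- The generalized Catalan numbers R^{n,m} := (m/(4n+m)) C(4n+m, n) (for 4n+m > 0, with R^{0,0} := 1) satisfy the recurrence R^{n,m} = R^{n,m-1} + R^{n-1,m+3} for all n \ge 1 and m \ge 1. -/
/-- The generalized Catalan numbers `R^{n,m} = (m/(4n+m)) C(4n+m,n)` for `4n+m > 0`,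
with `R^{0,0} := 1`. -/
def Rnm (n m : ℕ) : ℚ :=
  if n = 0 ∧ m = 0 then 1
  else (m : ℚ) / (4 * n + m) * (Nat.choose (4 * n + m) n : ℚ)

/-- Recurrence `R^{n,m} = R^{n,m-1} + R^{n-1,m+3}` for `n ≥ 1`, `m ≥ 1`. -/
theorem stmt10 (n m : ℕ) (hn : 1 ≤ n) (hm : 1 ≤ m) :
    Rnm n m = Rnm n (m - 1) + Rnm (n - 1) (m + 3) := by
  obtain ⟨k, rfl⟩ : ∃ k, n = k + 1 := ⟨n - 1, (Nat.succ_pred_eq_of_pos hn).symm⟩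
  obtain ⟨j, rfl⟩ : ∃ j, m = j + 1 := ⟨m - 1, (Nat.succ_pred_eq_of_pos hm).symm⟩
  simp only [Rnm, Nat.add_sub_cancel, Nat.add_succ_sub_one]
  rw [if_neg (by simp), if_neg (by simp), if_neg (by simp)]
  have h1 : 4 * (k + 1) + (j + 1) = (4 * k + j + 4) + 1 := by ring
  have h2 : 4 * (k + 1) + j = 4 * k + j + 4 := by ring
  have h3 : 4 * k + (j + 1 + 3) = 4 * k + j + 4 := by ring
  rw [h1, h2, h3]
  set N := 4 * k + j + 4 with hN
  have hrel : ((N + 1 : ℕ) : ℚ) * (Nat.choose N k : ℚ) =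
      ((Nat.choose (N + 1) (k + 1) : ℕ) : ℚ) * ((k + 1 : ℕ) : ℚ) := by
    exact_mod_cast congrArg (Nat.cast : ℕ → ℚ) (Nat.add_one_mul_choose_eq N k)
  have hpas : ((Nat.choose (N + 1) (k + 1) : ℕ) : ℚ) =
      ((Nat.choose N k : ℕ) : ℚ) + ((Nat.choose N (k + 1) : ℕ) : ℚ) := by
    exact_mod_cast congrArg (Nat.cast : ℕ → ℚ) (Nat.choose_succ_succ N k)
  have hNpos : (0 : ℚ) < (N : ℚ) := by positivity
  have hN1 : ((N : ℚ) + 1) ≠ 0 := by positivity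
  have hN0 : (N : ℚ) ≠ 0 := ne_of_gt hNpos
  push_cast at hrel hpas ⊢
  field_simp
  have hNq : (N : ℚ) = 4 * (k : ℚ) + j + 4 := by exact_mod_cast hN
  linear_combination ((j : ℚ) * (4*(k:ℚ)+j+4) * (4*(k:ℚ)+j+5)) * hpas +
    (-4 * (4*(k:ℚ)+j+4)) * hrel + (4 * (Nat.choose N k : ℚ) * ((j:ℚ)+4*k+4)) * hNq
end

section
/- The generalized Catalan numbers R^{n,m} = (m/(4n+m)) C(4n+m,n) satisfy the convolution (Hilton–Pedersen) identity: for all n \ge 0 and m, m' \ge 1, \sum_{\ell=0}^{n} R^{\ell,m} R^{n-\ell,m'} = R^{n, m+m'}. -/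
lemma Rnm_zero (m : ℕ) : Rnm 0 m = 1 := by
  unfold Rnm
  rcases Nat.eq_zero_or_pos m with h | h
  · simp [h]
  · have hm : (m : ℚ) ≠ 0 := by positivity
    simp only [if_neg (by omega : ¬(0 = 0 ∧ m = 0))]
    simp [hm]

lemma Rnm_zero_right (n : ℕ) (hn : n ≠ 0) : Rnm n 0 = 0 := by
  unfold Rnm
  simp [hn]

lemma Rnm_rec (n m : ℕ) (hn : 1 ≤ n) : Rnm n (m + 1) = Rnm n m + Rnm (n - 1) (m + 4) := by
  obtain ⟨k, rfl⟩ : ∃ k, n = k + 1 := ⟨n - 1, by omega⟩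
  unfold Rnm
  simp only [if_neg (by omega : ¬(k + 1 = 0 ∧ m + 1 = 0)),
    if_neg (by omega : ¬(k + 1 = 0 ∧ m = 0)),
    if_neg (by omega : ¬(k + 1 - 1 = 0 ∧ m + 4 = 0))]
  have h1 : 4 * (k + 1) + (m + 1) = (4 * (k + 1) + m) + 1 := by ring
  have h2 : 4 * (k + 1 - 1) + (m + 4) = 4 * (k + 1) + m := by omega
  rw [h1, h2]
  set a := 4 * (k + 1) + m with ha
  have hpascal : (a + 1).choose (k + 1) = a.choose k + a.choose (k + 1) :=
    Nat.choose_succ_succ' a k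
  have hratio : a.choose (k + 1) * (k + 1) = a.choose k * (a - k) :=
    Nat.choose_succ_right_eq a k
  have hak : a - k = 3 * k + m + 4 := by omega
  rw [hak] at hratio
  have hratioQ : (a.choose (k + 1) : ℚ) * (k + 1) = (a.choose k : ℚ) * (3 * k + m + 4) := by
    exact_mod_cast hratio
  have hcast : ((a + 1).choose (k + 1) : ℚ) = (a.choose k : ℚ) + (a.choose (k + 1) : ℚ) := by
    exact_mod_cast hpascal
  have hk1 : 4 * ((k:ℚ) + 1 - 1) = 4 * ((k + 1 : ℕ) - 1 : ℕ) := by push_cast [Nat.add_sub_cancel]; ring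
  have haQ : (a : ℚ) = 4 * (k + 1) + m := by push_cast [ha]; ring
  have ha0 : (a : ℚ) ≠ 0 := by rw [haQ]; positivity
  have ha1 : (a : ℚ) + 1 ≠ 0 := by rw [haQ]; positivity
  push_cast [hcast]
  have d1 : (4 * ((k:ℚ) + 1) + (↑m + 1)) ≠ 0 := by positivity
  have d2 : (4 * ((k:ℚ) + 1) + ↑m) ≠ 0 := by positivity
  have d3 : (4 * (k:ℚ) + (↑m + 4)) ≠ 0 := by positivity
  field_simp
  linear_combination (4 * (4 * (k:ℚ) + ↑m + 4)) * hratioQ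

lemma Rnm_aux : ∀ n m m', 1 ≤ m' →
    (∑ l ∈ Finset.range (n + 1), Rnm l m * Rnm (n - l) m') = Rnm n (m + m') := by
  intro n
  induction n using Nat.strong_induction_on with
  | _ n ih =>
    intro m
    induction m with
    | zero =>
      intro m' hm'
      rw [Finset.sum_eq_single 0]
      · simp [Rnm_zero]
      · intro b _ hb0
        rw [Rnm_zero_right b hb0]; ring
      · intro h; exact absurd (Finset.mem_range.mpr (by omega)) h
    | succ m ihm =>
      intro m' hm'
      rcases Nat.eq_zero_or_pos n with rfl | hn
      · simp [Rnm_zero]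
      · obtain ⟨k, rfl⟩ : ∃ k, n = k + 1 := ⟨n - 1, by omega⟩
        rw [Finset.sum_range_succ']
        have key : ∀ i ∈ Finset.range (k + 1),
            Rnm (i + 1) (m + 1) * Rnm (k + 1 - (i + 1)) m'
              = Rnm (i + 1) m * Rnm (k + 1 - (i + 1)) m' + Rnm i (m + 4) * Rnm (k - i) m' := by
          intro i _
          rw [Rnm_rec (i + 1) m (by omega)]
          have h : i + 1 - 1 = i := by omega
          have h2 : k + 1 - (i + 1) = k - i := by omega
          rw [h, h2]; ring
        rw [Finset.sum_congr rfl key, Finset.sum_add_distrib]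
        have e1 : (∑ i ∈ Finset.range (k + 1), Rnm (i + 1) m * Rnm (k + 1 - (i + 1)) m')
            + Rnm 0 m * Rnm (k + 1 - 0) m' = Rnm (k + 1) (m + m') := by
          rw [← Finset.sum_range_succ' (fun l => Rnm l m * Rnm (k + 1 - l) m') (k + 1)]
          exact ihm m' hm'
        have e2 : (∑ i ∈ Finset.range (k + 1), Rnm i (m + 4) * Rnm (k - i) m')
            = Rnm k (m + 4 + m') := ih k (by omega) (m + 4) m' hm'
        have e3 : Rnm 0 (m + 1) = Rnm 0 m := by rw [Rnm_zero, Rnm_zero]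
        have e4 : Rnm (k + 1) (m + m' + 1) = Rnm (k + 1) (m + m') + Rnm k (m + m' + 4) :=
          Rnm_rec (k + 1) (m + m') (by omega)
        have hmm : m + 1 + m' = m + m' + 1 := by omega
        have hmm2 : m + 4 + m' = m + m' + 4 := by omega
        have hk : k + 1 - 1 = k := by omega
        rw [e2, e3, hmm, e4, hmm2]
        linarith [e1]

/-- Hilton–Pedersen convolution identity:
`∑_{l=0}^{n} R^{l,m} R^{n-l,m'} = R^{n,m+m'}` for `n ≥ 0` and `m, m' ≥ 1`. -/
theorem stmt11 (n m m' : ℕ) (hm : 1 ≤ m) (hm' : 1 ≤ m') :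
    (∑ l ∈ Finset.range (n + 1), Rnm l m * Rnm (n - l) m') = Rnm n (m + m') :=
  Rnm_aux n m m' hm'
end

section
/- Define formal power series f_X(s) = \sum_{n\ge 0} R^n(1,0,0) s^{2n}, f_Y(s) = \sum_{n\ge 0} R^n(0,1,0) s^{2n}, f_Z(s) = \sum_{n\ge 0} R^n(0,0,1) s^{2n}, and \omega(s) = \sum_{n\ge 0} R^n(1,1,1) s^{2n+2}, where the coefficients R^n are evaluated with x = J_X^2, y = J_Y^2, z = J_Z^2. Then f_\alpha(s) \cdot (1 - \omega(s) J_\alpha^2) = 1 for each \alpha \in \{X,Y,Z\}. -/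
/-- `f_X(s) = ∑_{n≥0} R^n(1,0,0) s^{2n}` with `x = J_X^2`, `y = J_Y^2`, `z = J_Z^2`. -/
def fX {R : Type*} [CommRing R] (JX JY JZ : R) : PowerSeries R :=
  PowerSeries.mk fun k =>
    if k % 2 = 0 then Rpoly (JX ^ 2) (JY ^ 2) (JZ ^ 2) (k / 2) 1 0 0 else 0

/-- `f_Y(s) = ∑_{n≥0} R^n(0,1,0) s^{2n}`. -/
def fY {R : Type*} [CommRing R] (JX JY JZ : R) : PowerSeries R :=
  PowerSeries.mk fun k =>
    if k % 2 = 0 then Rpoly (JX ^ 2) (JY ^ 2) (JZ ^ 2) (k / 2) 0 1 0 else 0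

/-- `f_Z(s) = ∑_{n≥0} R^n(0,0,1) s^{2n}`. -/
def fZ {R : Type*} [CommRing R] (JX JY JZ : R) : PowerSeries R :=
  PowerSeries.mk fun k =>
    if k % 2 = 0 then Rpoly (JX ^ 2) (JY ^ 2) (JZ ^ 2) (k / 2) 0 0 1 else 0

/-- `ω(s) = ∑_{n≥0} R^n(1,1,1) s^{2n+2}`. -/
def omegaPS {R : Type*} [CommRing R] (JX JY JZ : R) : PowerSeries R :=
  PowerSeries.mk fun k =>
    if 2 ≤ k ∧ k % 2 = 0 then Rpoly (JX ^ 2) (JY ^ 2) (JZ ^ 2) ((k - 2) / 2) 1 1 1 else 0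

open PowerSeries Finset

namespace Aux

variable {A : Type*} [CommRing A]

noncomputable def Ea (a : A) : PowerSeries A := PowerSeries.mk fun k => a ^ k

@[simp] lemma coeff_Ea (a : A) (k : ℕ) : coeff k (Ea a) = a ^ k := coeff_mk _ _

lemma one_sub_mul_Ea (a : A) : (1 - C a * X) * Ea a = 1 := by
  ext k
  rw [sub_mul, one_mul, map_sub]
  cases k with
  | zero => simp [Ea, coeff_zero_eq_constantCoeff]
  | succ n =>
    rw [mul_assoc, coeff_C_mul, coeff_succ_X_mul]
    simp [pow_succ, mul_comm, coeff_one]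

@[simp] lemma Scoef_zero_right (N : ℕ) : Scoef N 0 = 1 := by simp [Scoef]

lemma Scoef_zero_left (k : ℕ) : Scoef 0 (k+1) = 0 := by
  simp [Scoef, Nat.choose_eq_zero_of_lt]

lemma Scoef_one (k : ℕ) : Scoef 1 k = 1 := by simp [Scoef]

lemma Scoef_pascal (N k : ℕ) : Scoef (N+1) (k+1) = Scoef (N+1) k + Scoef N (k+1) := by
  cases N with
  | zero => simp [Scoef_one, Scoef_zero_left]
  | succ M =>
    show (k+1 + (M+2) - 1).choose (k+1) = (k + (M+2) - 1).choose k + (k+1 + (M+1) - 1).choose (k+1)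
    have h1 : k+1 + (M+2) - 1 = (k + M + 1) + 1 := by omega
    have h2 : k + (M+2) - 1 = k + M + 1 := by omega
    have h3 : k+1 + (M+1) - 1 = k + M + 1 := by omega
    rw [h1, h2, h3, Nat.choose_succ_succ]

/-- power series with coefficients `Scoef N k * a^k` -/
noncomputable def mkS (a : A) (N : ℕ) : PowerSeries A :=
  PowerSeries.mk fun k => (Scoef N k : A) * a ^ k

lemma one_sub_mul_mkS (a : A) (N : ℕ) : (1 - C a * X) * mkS a (N+1) = mkS a N := by
  ext k
  rw [sub_mul, one_mul, map_sub]
  cases k with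
  | zero => simp [mkS]
  | succ n =>
    rw [mul_assoc, coeff_C_mul, coeff_succ_X_mul]
    simp only [mkS, coeff_mk]
    rw [Scoef_pascal]
    push_cast
    ring

lemma mkS_zero (a : A) : mkS a 0 = 1 := by
  ext k
  cases k with
  | zero => simp [mkS]
  | succ n => simp [mkS, Scoef_zero_left, coeff_one]

lemma Ea_pow (a : A) (N : ℕ) : (Ea a) ^ N = mkS a N := by
  induction N with
  | zero => rw [pow_zero, mkS_zero]
  | succ M ih =>
    have : mkS a (M+1) = mkS a M * Ea a := by
      calc mkS a (M+1) = ((1 - C a * X) * Ea a) * mkS a (M+1) := by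
            rw [one_sub_mul_Ea]; ring
        _ = ((1 - C a * X) * mkS a (M+1)) * Ea a := by ring
        _ = mkS a M * Ea a := by rw [one_sub_mul_mkS]
    rw [pow_succ, ih, this]

@[simp] lemma coeff_Ea_pow (a : A) (N k : ℕ) :
    coeff k ((Ea a) ^ N) = (Scoef N k : A) * a ^ k := by
  rw [Ea_pow]; exact coeff_mk _ _

/-- coefficient of a product as a range sum -/
lemma coeff_mul_range (F G : PowerSeries A) (n : ℕ) :
    coeff n (F * G) = ∑ a ∈ range (n+1), coeff a F * coeff (n - a) G := by
  rw [coeff_mul, Finset.Nat.sum_antidiagonal_eq_sum_range_succ_mk]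

lemma Spoly_eq (x y z : A) (n Nx Ny Nz : ℕ) :
    Spoly x y z n Nx Ny Nz = coeff n (Ea x ^ Nx * (Ea y ^ Ny * Ea z ^ Nz)) := by
  rw [coeff_mul_range]
  unfold Spoly
  apply Finset.sum_congr rfl
  intro a ha
  rw [coeff_mul_range, coeff_Ea_pow, Finset.mul_sum]
  have hr : n + 1 - a = n - a + 1 := by
    have := Finset.mem_range.mp ha; omega
  rw [hr]
  apply Finset.sum_congr rfl
  intro b hb
  rw [coeff_Ea_pow, coeff_Ea_pow]
  ring

variable (x y z : A)

noncomputable def Pp : PowerSeries A :=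
  (1 - C x * X) * ((1 - C y * X) * (1 - C z * X))

noncomputable def Pinv : PowerSeries A := Ea x * (Ea y * Ea z)

lemma Pp_mul_Pinv : Pp x y z * Pinv x y z = 1 := by
  have : Pp x y z * Pinv x y z
      = ((1 - C x * X) * Ea x) * (((1 - C y * X) * Ea y) * ((1 - C z * X) * Ea z)) := by
    unfold Pp Pinv; ring
  rw [this, one_sub_mul_Ea, one_sub_mul_Ea, one_sub_mul_Ea, one_mul, one_mul]

noncomputable def Dd : PowerSeries A := Pp x y z + X * (d⁄dX A (Pp x y z))

lemma deriv_one_sub (a : A) : d⁄dX A (1 - C a * X) = - C a := by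
  rw [map_sub, Derivation.leibniz, derivative_X, derivative_C]
  simp

lemma Dd_eq : Dd x y z = 4 * Pp x y z
    - (1 - C y * X) * (1 - C z * X)
    - (1 - C x * X) * (1 - C z * X)
    - (1 - C x * X) * (1 - C y * X) := by
  unfold Dd Pp
  rw [Derivation.leibniz, Derivation.leibniz, deriv_one_sub, deriv_one_sub, deriv_one_sub]
  simp only [smul_eq_mul]
  ring

lemma Ea_mul_cancel (a : A) (F : PowerSeries A) : Ea a * ((1 - C a * X) * F) = F := by
  rw [← mul_assoc, mul_comm (Ea a), one_sub_mul_Ea, one_mul]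

lemma fourE : (4 : PowerSeries A) - Ea x - Ea y - Ea z = Dd x y z * Pinv x y z := by
  have key : ((4 : PowerSeries A) - Ea x - Ea y - Ea z) * Pp x y z = Dd x y z := by
    have hx : Ea x * Pp x y z = (1 - C y * X) * (1 - C z * X) := Ea_mul_cancel x _
    have hy : Ea y * Pp x y z = (1 - C x * X) * (1 - C z * X) := by
      unfold Pp
      calc Ea y * ((1 - C x * X) * ((1 - C y * X) * (1 - C z * X)))
          = (1 - C x * X) * (Ea y * ((1 - C y * X) * (1 - C z * X))) := by ring
        _ = (1 - C x * X) * (1 - C z * X) := by rw [Ea_mul_cancel]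
    have hz : Ea z * Pp x y z = (1 - C x * X) * (1 - C y * X) := by
      unfold Pp
      calc Ea z * ((1 - C x * X) * ((1 - C y * X) * (1 - C z * X)))
          = (1 - C x * X) * (Ea z * ((1 - C z * X) * (1 - C y * X))) := by ring
        _ = (1 - C x * X) * (1 - C y * X) := by rw [Ea_mul_cancel]
    rw [Dd_eq]
    calc ((4 : PowerSeries A) - Ea x - Ea y - Ea z) * Pp x y z
        = 4 * Pp x y z - Ea x * Pp x y z - Ea y * Pp x y z - Ea z * Pp x y z := by ring
      _ = _ := by rw [hx, hy, hz]
  calc (4 : PowerSeries A) - Ea x - Ea y - Ea z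
      = (((4 : PowerSeries A) - Ea x - Ea y - Ea z) * Pp x y z) * Pinv x y z := by
        rw [mul_assoc, Pp_mul_Pinv, mul_one]
    _ = Dd x y z * Pinv x y z := by rw [key]

lemma Rpoly_eq (n Nx Ny Nz : ℕ) :
    Rpoly x y z n Nx Ny Nz
      = coeff n (Ea x ^ Nx * (Ea y ^ Ny * Ea z ^ Nz) * Pinv x y z ^ n
          * (Dd x y z * Pinv x y z)) := by
  rw [← fourE]
  unfold Rpoly
  rw [Spoly_eq, Spoly_eq, Spoly_eq, Spoly_eq]
  have expand : Ea x ^ Nx * (Ea y ^ Ny * Ea z ^ Nz) * Pinv x y z ^ n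
      * ((4 : PowerSeries A) - Ea x - Ea y - Ea z)
      = 4 * (Ea x ^ (Nx+n) * (Ea y ^ (Ny+n) * Ea z ^ (Nz+n)))
        - Ea x ^ (Nx+n+1) * (Ea y ^ (Ny+n) * Ea z ^ (Nz+n))
        - Ea x ^ (Nx+n) * (Ea y ^ (Ny+n+1) * Ea z ^ (Nz+n))
        - Ea x ^ (Nx+n) * (Ea y ^ (Ny+n) * Ea z ^ (Nz+n+1)) := by
    unfold Pinv
    ring
  rw [expand, map_sub, map_sub, map_sub, ← map_ofNat C 4, coeff_C_mul]

lemma Pp_pow_mul_Pinv_pow (m : ℕ) : Pp x y z ^ m * Pinv x y z ^ m = 1 := by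
  rw [← mul_pow, Pp_mul_Pinv, one_pow]

lemma constCoeff_g : coeff 0 (X * Pp x y z) = 0 := by
  simp [coeff_zero_eq_constantCoeff]

lemma coeff_g_pow_lt {j m : ℕ} (h : j < m) : coeff j ((X * Pp x y z) ^ m) = 0 := by
  rw [mul_pow, coeff_X_pow_mul']
  simp [Nat.not_le.mpr h]

lemma coeff_g_pow_self (m : ℕ) : coeff m ((X * Pp x y z) ^ m) = 1 := by
  rw [mul_pow, coeff_X_pow_mul']
  simp only [le_refl, if_true, Nat.sub_self]
  rw [coeff_zero_eq_constantCoeff, map_pow]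
  have : constantCoeff (Pp x y z) = 1 := by unfold Pp; simp
  rw [this, one_pow]

section Zero
variable [IsDomain A] [CharZero A]

lemma deriv_Pinv_pow (m : ℕ) :
    d⁄dX A (Pinv x y z ^ (m+1))
      = -((m+1 : ℕ) • (d⁄dX A (Pp x y z) * Pinv x y z ^ (m+2))) := by
  have h0 : Pp x y z ^ (m+1) * Pinv x y z ^ (m+1) = 1 := Pp_pow_mul_Pinv_pow x y z (m+1)
  have hD := congrArg (d⁄dX A) h0
  rw [Derivation.leibniz, Derivation.map_one_eq_zero] at hD
  -- hD : Pp^{m+1} • D(Pinv^{m+1}) + Pinv^{m+1} • D(Pp^{m+1}) = 0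
  simp only [smul_eq_mul] at hD
  have h1 : Pinv x y z ^ (m+1) * (Pp x y z ^ (m+1) * d⁄dX A (Pinv x y z ^ (m+1)))
      + Pinv x y z ^ (m+1) * (Pinv x y z ^ (m+1) * d⁄dX A (Pp x y z ^ (m+1))) = 0 := by
    rw [← mul_add, hD, mul_zero]
  rw [← mul_assoc, mul_comm (Pinv x y z ^ (m+1)) (Pp x y z ^ (m+1)),
    Pp_pow_mul_Pinv_pow, one_mul] at h1
  have h2 : d⁄dX A (Pinv x y z ^ (m+1))
      = -(Pinv x y z ^ (m+1) * (Pinv x y z ^ (m+1) * d⁄dX A (Pp x y z ^ (m+1)))) := by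
    linear_combination h1
  rw [h2, Derivation.leibniz_pow]
  simp only [smul_eq_mul, Nat.add_sub_cancel, nsmul_eq_mul]
  push_cast
  have h3 : Pinv x y z ^ (m+1) * (Pinv x y z ^ (m+1) * (((m:A⟦X⟧)+1) * (Pp x y z ^ m * d⁄dX A (Pp x y z))))
      = ((m:A⟦X⟧)+1) * (d⁄dX A (Pp x y z) * (Pinv x y z ^ (m+2) * (Pinv x y z ^ m * Pp x y z ^ m))) := by
    ring
  rw [h3, mul_comm (Pinv x y z ^ m) (Pp x y z ^ m), Pp_pow_mul_Pinv_pow, mul_one]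

lemma constCoeff_DdPinv : coeff 0 (Dd x y z * Pinv x y z) = 1 := by
  have : coeff 0 (Dd x y z * Pinv x y z)
      = constantCoeff (Dd x y z) * constantCoeff (Pinv x y z) := by
    rw [coeff_zero_eq_constantCoeff, map_mul]
  rw [this]
  have h1 : constantCoeff (Dd x y z) = 1 := by
    unfold Dd Pp
    simp
  have h2 : constantCoeff (Pinv x y z) = 1 := by
    unfold Pinv Ea
    rw [← coeff_zero_eq_constantCoeff]
    rw [coeff_mul_range]
    simp
  rw [h1, h2, mul_one]

lemma ZERO (m : ℕ) : coeff (m+1) (Dd x y z * Pinv x y z ^ (m+2)) = 0 := by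
  have split : Dd x y z * Pinv x y z ^ (m+2)
      = Pinv x y z ^ (m+1) + X * (d⁄dX A (Pp x y z) * Pinv x y z ^ (m+2)) := by
    unfold Dd
    have : Pp x y z * Pinv x y z ^ (m+2)
        = (Pp x y z * Pinv x y z) * Pinv x y z ^ (m+1) := by ring
    rw [add_mul, this, Pp_mul_Pinv, one_mul]
    ring
  have key : ((m+1 : ℕ) : A) * coeff (m+1) (Dd x y z * Pinv x y z ^ (m+2)) = 0 := by
    rw [split, map_add, mul_add]
    have hA : ((m+1 : ℕ) : A) * coeff (m+1) (Pinv x y z ^ (m+1))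
        = coeff m (d⁄dX A (Pinv x y z ^ (m+1))) := by
      rw [coeff_derivative, mul_comm]
      push_cast
      ring
    have hB : coeff m (d⁄dX A (Pinv x y z ^ (m+1)))
        = -(((m+1 : ℕ) : A) * coeff m (d⁄dX A (Pp x y z) * Pinv x y z ^ (m+2))) := by
      rw [deriv_Pinv_pow, map_neg, map_nsmul, nsmul_eq_mul]
    rw [coeff_succ_X_mul, hA, hB]
    ring
  rcases mul_eq_zero.mp key with h | h
  · exact absurd h (by exact_mod_cast Nat.succ_ne_zero m)
  · exact h

lemma DdPinv_delta (n : ℕ) :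
    coeff n (Dd x y z * Pinv x y z ^ (n+1)) = if n = 0 then 1 else 0 := by
  cases n with
  | zero => simpa using constCoeff_DdPinv x y z
  | succ m => simpa using ZERO x y z m

lemma KEY (N : ℕ) (F : PowerSeries A) :
    ∑ n ∈ range (N+1), coeff n (F * (Dd x y z * Pinv x y z ^ (n+1)))
      * coeff N ((X * Pp x y z) ^ n) = coeff N F := by
  induction N using Nat.strong_induction_on generalizing F with
  | _ N IH =>
  set B : PowerSeries A := PowerSeries.mk fun i => coeff (i+1) F with hB
  have hF : F = C (coeff 0 F) + X * B := by
    ext k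
    cases k with
    | zero => simp [hB, coeff_zero_eq_constantCoeff]
    | succ i => simp [hB, coeff_succ_X_mul, coeff_C]
  set A' : PowerSeries A := B * Pinv x y z with hA'
  have hXB : X * B = (X * Pp x y z) * A' := by
    rw [hA']
    calc X * B = (X * B) * (Pp x y z * Pinv x y z) := by rw [Pp_mul_Pinv, mul_one]
      _ = X * Pp x y z * (B * Pinv x y z) := by ring
  have hsecond : ∀ n : ℕ, (X * B) * (Dd x y z * Pinv x y z ^ (n+1))
      = X * (A' * (Dd x y z * Pinv x y z ^ n)) := by
    intro n
    rw [hXB]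
    calc X * Pp x y z * A' * (Dd x y z * Pinv x y z ^ (n+1))
        = X * (A' * (Dd x y z * Pinv x y z ^ n)) * (Pp x y z * Pinv x y z) := by ring
      _ = _ := by rw [Pp_mul_Pinv, mul_one]
  have hT0 : coeff 0 (F * (Dd x y z * Pinv x y z ^ (0+1))) * coeff N ((X * Pp x y z) ^ 0)
      = coeff 0 F * coeff N 1 := by
    rw [pow_zero, pow_one, coeff_mul, Finset.Nat.antidiagonal_zero, Finset.sum_singleton,
      constCoeff_DdPinv x y z, mul_one]
  have hshift : ∀ m : ℕ, coeff (m+1) (F * (Dd x y z * Pinv x y z ^ (m+1+1)))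
      = coeff m (A' * (Dd x y z * Pinv x y z ^ (m+1))) := by
    intro m
    conv_lhs => rw [hF]
    rw [add_mul, map_add, coeff_C_mul]
    rw [ZERO x y z m, mul_zero, zero_add, hsecond (m+1), coeff_succ_X_mul]
  have hgN : ∀ m : ℕ, coeff N ((X * Pp x y z) ^ (m+1))
      = ∑ i ∈ range (N+1), coeff i (X * Pp x y z) * coeff (N-i) ((X * Pp x y z) ^ m) := by
    intro m
    conv_lhs => rw [pow_succ']
    rw [coeff_mul_range]
  rw [Finset.sum_range_succ']
  have step1 : ∑ m ∈ range N, coeff (m+1) (F * (Dd x y z * Pinv x y z ^ (m+1+1)))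
      * coeff N ((X * Pp x y z) ^ (m+1))
      = ∑ i ∈ range (N+1), coeff i (X * Pp x y z)
          * ∑ m ∈ range N, coeff m (A' * (Dd x y z * Pinv x y z ^ (m+1)))
              * coeff (N-i) ((X * Pp x y z) ^ m) := by
    calc ∑ m ∈ range N, coeff (m+1) (F * (Dd x y z * Pinv x y z ^ (m+1+1)))
          * coeff N ((X * Pp x y z) ^ (m+1))
        = ∑ m ∈ range N, ∑ i ∈ range (N+1),
            coeff m (A' * (Dd x y z * Pinv x y z ^ (m+1)))
              * (coeff i (X * Pp x y z) * coeff (N-i) ((X * Pp x y z) ^ m)) := by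
          apply Finset.sum_congr rfl
          intro m _
          rw [hshift m, hgN m, Finset.mul_sum]
      _ = ∑ i ∈ range (N+1), ∑ m ∈ range N,
            coeff m (A' * (Dd x y z * Pinv x y z ^ (m+1)))
              * (coeff i (X * Pp x y z) * coeff (N-i) ((X * Pp x y z) ^ m)) :=
          Finset.sum_comm
      _ = _ := by
          apply Finset.sum_congr rfl
          intro i _
          rw [Finset.mul_sum]
          apply Finset.sum_congr rfl
          intro m _
          ring
  have step2 : ∀ i ∈ range (N+1),
      coeff i (X * Pp x y z)
        * ∑ m ∈ range N, coeff m (A' * (Dd x y z * Pinv x y z ^ (m+1)))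
            * coeff (N-i) ((X * Pp x y z) ^ m)
      = coeff i (X * Pp x y z) * coeff (N-i) A' := by
    intro i hi
    cases i with
    | zero => rw [constCoeff_g, zero_mul, zero_mul]
    | succ i' =>
      have hiN : i' + 1 ≤ N := by simpa using Finset.mem_range.mp hi
      have hj : N - (i'+1) < N := by omega
      congr 1
      have hsub : range (N - (i'+1) + 1) ⊆ range N := by
        intro t ht
        simp only [Finset.mem_range] at ht ⊢
        omega
      rw [← Finset.sum_subset hsub (by
        intro t _ ht
        have : N - (i'+1) < t := by
          simp only [Finset.mem_range, not_lt] at ht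
          omega
        rw [coeff_g_pow_lt x y z this, mul_zero])]
      exact IH _ hj A'
  rw [step1, Finset.sum_congr rfl step2, hT0, ← coeff_mul_range, ← hXB]
  conv_rhs => rw [hF]
  rw [map_add, coeff_C, coeff_one]
  by_cases hN : N = 0 <;> simp [hN, add_comm]

end Zero

/-- substitution of `u := X * P` -/
noncomputable def Phi (F : PowerSeries A) : PowerSeries A :=
  PowerSeries.mk fun N => ∑ n ∈ range (N+1), coeff n F * coeff N ((X * Pp x y z) ^ n)

@[simp] lemma coeff_Phi (F : PowerSeries A) (N : ℕ) :
    coeff N (Phi x y z F) = ∑ n ∈ range (N+1), coeff n F * coeff N ((X * Pp x y z) ^ n) :=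
  coeff_mk _ _

lemma Phi_one : Phi x y z 1 = 1 := by
  ext N
  rw [coeff_Phi]
  rw [Finset.sum_eq_single 0]
  · rw [pow_zero, coeff_one, coeff_one]
    simp
  · intro n _ hn
    rw [coeff_one, if_neg hn, zero_mul]
  · intro h
    exact absurd (Finset.mem_range.mpr (Nat.succ_pos N)) h

lemma Phi_X : Phi x y z X = X * Pp x y z := by
  ext N
  rw [coeff_Phi]
  cases N with
  | zero =>
    rw [Finset.sum_range_one, pow_zero, coeff_X, constCoeff_g]
    simp
  | succ M =>
    rw [Finset.sum_eq_single 1]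
    · rw [pow_one, coeff_X, if_pos rfl, one_mul]
    · intro n _ hn
      rw [coeff_X, if_neg hn, zero_mul]
    · intro h
      exact absurd (Finset.mem_range.mpr (by omega)) h

lemma Phi_C_mul (r : A) (F : PowerSeries A) : Phi x y z (C r * F) = C r * Phi x y z F := by
  ext N
  rw [coeff_Phi, coeff_C_mul, coeff_Phi, Finset.mul_sum]
  apply Finset.sum_congr rfl
  intro n _
  rw [coeff_C_mul]
  ring

lemma Phi_sub (F G : PowerSeries A) : Phi x y z (F - G) = Phi x y z F - Phi x y z G := by
  ext N
  rw [map_sub, coeff_Phi, coeff_Phi, coeff_Phi, ← Finset.sum_sub_distrib]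
  apply Finset.sum_congr rfl
  intro n _
  rw [map_sub]
  ring

lemma triangle_sum {M : Type*} [AddCommMonoid M] (N : ℕ) (f : ℕ × ℕ → M)
    (hf : ∀ p : ℕ × ℕ, N < p.1 + p.2 → f p = 0) :
    ∑ n ∈ range (N+1), ∑ p ∈ Finset.HasAntidiagonal.antidiagonal n, f p
      = ∑ a ∈ range (N+1), ∑ b ∈ range (N+1), f (a, b) := by
  rw [← Finset.sum_product]
  rw [← Finset.sum_biUnion (by
    intro i hi j hj hij
    simp only [Function.onFun]
    rw [Finset.disjoint_left]
    intro p hpi hpj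
    rw [Finset.HasAntidiagonal.mem_antidiagonal] at hpi hpj
    exact hij (by omega))]
  apply Finset.sum_subset
  · intro p hp
    simp only [Finset.mem_biUnion, Finset.mem_range, Finset.HasAntidiagonal.mem_antidiagonal] at hp
    obtain ⟨n, hn, hpn⟩ := hp
    simp only [Finset.mem_product, Finset.mem_range]
    omega
  · intro p hp hnp
    apply hf
    by_contra h
    push_neg at h
    exact hnp (Finset.mem_biUnion.mpr
      ⟨p.1 + p.2, Finset.mem_range.mpr (by omega), Finset.HasAntidiagonal.mem_antidiagonal.mpr rfl⟩)

lemma Phi_mul (F G : PowerSeries A) : Phi x y z (F * G) = Phi x y z F * Phi x y z G := by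
  ext N
  set g : PowerSeries A := X * Pp x y z with hg
  set f : ℕ × ℕ → A := fun p => ∑ q ∈ Finset.HasAntidiagonal.antidiagonal N,
    coeff p.1 F * coeff p.2 G * (coeff q.1 (g ^ p.1) * coeff q.2 (g ^ p.2)) with hf
  have hf0 : ∀ p : ℕ × ℕ, N < p.1 + p.2 → f p = 0 := by
    intro p hp
    apply Finset.sum_eq_zero
    intro q hq
    rw [Finset.HasAntidiagonal.mem_antidiagonal] at hq
    rcases lt_or_ge q.1 p.1 with h | h
    · rw [coeff_g_pow_lt x y z h]
      ring
    · have h2 : q.2 < p.2 := by omega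
      rw [coeff_g_pow_lt x y z h2]
      ring
  have lhs_eq : coeff N (Phi x y z (F * G)) = ∑ n ∈ range (N+1), ∑ p ∈ Finset.HasAntidiagonal.antidiagonal n, f p := by
    rw [coeff_Phi]
    apply Finset.sum_congr rfl
    intro n _
    rw [coeff_mul, Finset.sum_mul]
    apply Finset.sum_congr rfl
    intro p hp
    rw [Finset.HasAntidiagonal.mem_antidiagonal] at hp
    rw [← hp, pow_add, coeff_mul, Finset.mul_sum]
  have rhs_eq : coeff N (Phi x y z F * Phi x y z G)
      = ∑ a ∈ range (N+1), ∑ b ∈ range (N+1), f (a, b) := by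
    rw [coeff_mul]
    calc ∑ q ∈ Finset.HasAntidiagonal.antidiagonal N, coeff q.1 (Phi x y z F) * coeff q.2 (Phi x y z G)
        = ∑ q ∈ Finset.HasAntidiagonal.antidiagonal N, ∑ a ∈ range (N+1), ∑ b ∈ range (N+1),
            coeff a F * coeff b G * (coeff q.1 (g ^ a) * coeff q.2 (g ^ b)) := by
          apply Finset.sum_congr rfl
          intro q hq
          rw [Finset.HasAntidiagonal.mem_antidiagonal] at hq
          have h1 : coeff q.1 (Phi x y z F) = ∑ a ∈ range (N+1), coeff a F * coeff q.1 (g ^ a) := by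
            rw [coeff_Phi]
            apply Finset.sum_subset
            · intro t ht
              simp only [Finset.mem_range] at ht ⊢
              omega
            · intro t _ ht
              simp only [Finset.mem_range, not_lt] at ht
              rw [coeff_g_pow_lt x y z (by omega), mul_zero]
          have h2 : coeff q.2 (Phi x y z G) = ∑ b ∈ range (N+1), coeff b G * coeff q.2 (g ^ b) := by
            rw [coeff_Phi]
            apply Finset.sum_subset
            · intro t ht
              simp only [Finset.mem_range] at ht ⊢
              omega
            · intro t _ ht
              simp only [Finset.mem_range, not_lt] at ht
              rw [coeff_g_pow_lt x y z (by omega), mul_zero]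
          rw [h1, h2, Finset.sum_mul_sum]
          apply Finset.sum_congr rfl
          intro a _
          apply Finset.sum_congr rfl
          intro b _
          ring
      _ = ∑ a ∈ range (N+1), ∑ q ∈ Finset.HasAntidiagonal.antidiagonal N, ∑ b ∈ range (N+1),
            coeff a F * coeff b G * (coeff q.1 (g ^ a) * coeff q.2 (g ^ b)) :=
          Finset.sum_comm
      _ = ∑ a ∈ range (N+1), ∑ b ∈ range (N+1), f (a, b) := by
          apply Finset.sum_congr rfl
          intro a _
          exact Finset.sum_comm
  rw [lhs_eq, rhs_eq, triangle_sum N f hf0]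


lemma Phi_eq_one (F : PowerSeries A) (h : Phi x y z F = 1) : F = 1 := by
  ext N
  induction N using Nat.strong_induction_on with
  | _ N IH =>
  have hN := congrArg (coeff N) h
  rw [coeff_Phi, Finset.sum_range_succ, coeff_g_pow_self, mul_one] at hN
  have hsum : ∑ n ∈ range N, coeff n F * coeff N ((X * Pp x y z) ^ n) = 0 := by
    apply Finset.sum_eq_zero
    intro n hn
    have hnN := Finset.mem_range.mp hn
    rw [IH n hnN, coeff_one]
    by_cases h0 : n = 0
    · subst h0
      rw [if_pos rfl, pow_zero, coeff_one, if_neg (by omega), mul_zero]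
    · rw [if_neg h0, zero_mul]
  rw [hsum, zero_add] at hN
  rw [hN]

section UMain
variable [IsDomain A] [CharZero A]

lemma umain :
    (PowerSeries.mk fun n => Rpoly x y z n 1 0 0 : PowerSeries A)
      * (1 - C x * (X * PowerSeries.mk fun n => Rpoly x y z n 1 1 1)) = 1 := by
  set Cc : PowerSeries A := PowerSeries.mk fun n => Rpoly x y z n 1 0 0 with hCc
  set Dc : PowerSeries A := PowerSeries.mk fun n => Rpoly x y z n 1 1 1 with hDc
  have hC : Phi x y z Cc = Ea x := by
    ext N
    rw [coeff_Phi]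
    have hterm : ∀ n, coeff n Cc = coeff n (Ea x * (Dd x y z * Pinv x y z ^ (n+1))) := by
      intro n
      rw [hCc, coeff_mk, Rpoly_eq]
      congr 1
      rw [pow_one, pow_zero, pow_zero]
      ring
    calc ∑ n ∈ range (N+1), coeff n Cc * coeff N ((X * Pp x y z) ^ n)
        = ∑ n ∈ range (N+1), coeff n (Ea x * (Dd x y z * Pinv x y z ^ (n+1)))
            * coeff N ((X * Pp x y z) ^ n) := by
          apply Finset.sum_congr rfl
          intro n _
          rw [hterm n]
      _ = coeff N (Ea x) := KEY x y z N (Ea x)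
  have hD : Phi x y z Dc = Pinv x y z := by
    ext N
    rw [coeff_Phi]
    have hterm : ∀ n, coeff n Dc = coeff n (Pinv x y z * (Dd x y z * Pinv x y z ^ (n+1))) := by
      intro n
      rw [hDc, coeff_mk, Rpoly_eq]
      congr 1
      rw [pow_one, pow_one, pow_one]
      unfold Pinv
      ring
    calc ∑ n ∈ range (N+1), coeff n Dc * coeff N ((X * Pp x y z) ^ n)
        = ∑ n ∈ range (N+1), coeff n (Pinv x y z * (Dd x y z * Pinv x y z ^ (n+1)))
            * coeff N ((X * Pp x y z) ^ n) := by
          apply Finset.sum_congr rfl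
          intro n _
          rw [hterm n]
      _ = coeff N (Pinv x y z) := KEY x y z N (Pinv x y z)
  apply Phi_eq_one x y z
  rw [Phi_mul, Phi_sub, Phi_one, Phi_C_mul, Phi_mul, Phi_X, hC, hD]
  rw [mul_assoc X (Pp x y z) (Pinv x y z), Pp_mul_Pinv, mul_one]
  rw [mul_comm (Ea x)]
  exact one_sub_mul_Ea x

end UMain

/-- substitute `X := X^2` -/
noncomputable def ev (F : PowerSeries A) : PowerSeries A :=
  PowerSeries.mk fun k => if k % 2 = 0 then coeff (k/2) F else 0

@[simp] lemma coeff_ev (F : PowerSeries A) (k : ℕ) :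
    coeff k (ev F) = if k % 2 = 0 then coeff (k/2) F else 0 := coeff_mk _ _

lemma ev_one : ev (1 : PowerSeries A) = 1 := by
  ext k
  rw [coeff_ev, coeff_one, coeff_one]
  by_cases h2 : k % 2 = 0
  · rw [if_pos h2]
    by_cases h0 : k = 0
    · subst h0; norm_num
    · rw [if_neg (by omega), if_neg h0]
  · rw [if_neg h2, if_neg (by omega)]

lemma ev_C (r : A) : ev (C r) = C r := by
  ext k
  rw [coeff_ev, coeff_C, coeff_C]
  by_cases h2 : k % 2 = 0
  · rw [if_pos h2]
    by_cases h0 : k = 0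
    · subst h0; norm_num
    · rw [if_neg (by omega), if_neg h0]
  · rw [if_neg h2, if_neg (by omega)]

lemma ev_sub (F G : PowerSeries A) : ev (F - G) = ev F - ev G := by
  ext k
  rw [map_sub, coeff_ev, coeff_ev, coeff_ev, map_sub]
  split_ifs <;> simp

lemma ev_mul (F G : PowerSeries A) : ev (F * G) = ev F * ev G := by
  ext k
  rw [coeff_mul, coeff_ev]
  by_cases hk : k % 2 = 0
  · rw [if_pos hk]
    symm
    have himage : (Finset.HasAntidiagonal.antidiagonal (k/2)).image (fun q : ℕ × ℕ => (2*q.1, 2*q.2))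
        ⊆ Finset.HasAntidiagonal.antidiagonal k := by
      intro p hp
      simp only [Finset.mem_image, Finset.HasAntidiagonal.mem_antidiagonal] at hp ⊢
      obtain ⟨q, hq, rfl⟩ := hp
      omega
    have hvanish : ∀ p ∈ Finset.HasAntidiagonal.antidiagonal k,
        p ∉ (Finset.HasAntidiagonal.antidiagonal (k/2)).image (fun q : ℕ × ℕ => (2*q.1, 2*q.2)) →
        coeff p.1 (ev F) * coeff p.2 (ev G) = 0 := by
      intro p hp hnp
      rw [Finset.HasAntidiagonal.mem_antidiagonal] at hp
      by_cases h1 : p.1 % 2 = 0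
      · exfalso
        apply hnp
        simp only [Finset.mem_image, Finset.HasAntidiagonal.mem_antidiagonal]
        exact ⟨(p.1/2, p.2/2), by omega, by ext <;> simp <;> omega⟩
      · rw [coeff_ev, if_neg h1, zero_mul]
    calc ∑ p ∈ Finset.HasAntidiagonal.antidiagonal k, coeff p.1 (ev F) * coeff p.2 (ev G)
        = ∑ p ∈ (Finset.HasAntidiagonal.antidiagonal (k/2)).image (fun q : ℕ × ℕ => (2*q.1, 2*q.2)),
            coeff p.1 (ev F) * coeff p.2 (ev G) :=
          (Finset.sum_subset himage hvanish).symm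
      _ = ∑ q ∈ Finset.HasAntidiagonal.antidiagonal (k/2), coeff (2*q.1) (ev F) * coeff (2*q.2) (ev G) := by
          apply Finset.sum_image
          intro q1 _ q2 _ h
          have h1 := congrArg Prod.fst h
          have h2 := congrArg Prod.snd h
          simp only at h1 h2
          ext <;> omega
      _ = ∑ q ∈ Finset.HasAntidiagonal.antidiagonal (k/2), coeff q.1 F * coeff q.2 G := by
          apply Finset.sum_congr rfl
          intro q _
          rw [coeff_ev, coeff_ev, if_pos (by omega), if_pos (by omega),
            Nat.mul_div_cancel_left q.1 (by norm_num), Nat.mul_div_cancel_left q.2 (by norm_num)]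
      _ = coeff (k/2) (F * G) := (coeff_mul _ _ _).symm
  · rw [if_neg hk]
    symm
    apply Finset.sum_eq_zero
    intro p hp
    rw [Finset.HasAntidiagonal.mem_antidiagonal] at hp
    by_cases h1 : p.1 % 2 = 0
    · rw [coeff_ev (G) p.2, if_neg (by omega), mul_zero]
    · rw [coeff_ev (F) p.1, if_neg h1, zero_mul]

lemma main_assembled [IsDomain A] [CharZero A] :
    (PowerSeries.mk fun k => if k % 2 = 0 then Rpoly x y z (k/2) 1 0 0 else 0 : PowerSeries A)
      * (1 - (PowerSeries.mk fun k =>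
            if 2 ≤ k ∧ k % 2 = 0 then Rpoly x y z ((k-2)/2) 1 1 1 else 0)
          * C x) = 1 := by
  set Cc : PowerSeries A := PowerSeries.mk fun n => Rpoly x y z n 1 0 0 with hCc
  set Dc : PowerSeries A := PowerSeries.mk fun n => Rpoly x y z n 1 1 1 with hDc
  have h1 : (PowerSeries.mk fun k => if k % 2 = 0 then Rpoly x y z (k/2) 1 0 0 else 0
      : PowerSeries A) = ev Cc := by
    ext k
    rw [coeff_mk, coeff_ev, hCc]
    by_cases hk : k % 2 = 0
    · rw [if_pos hk, if_pos hk, coeff_mk]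
    · rw [if_neg hk, if_neg hk]
  have h2 : (PowerSeries.mk fun k =>
        if 2 ≤ k ∧ k % 2 = 0 then Rpoly x y z ((k-2)/2) 1 1 1 else 0 : PowerSeries A)
      = ev (X * Dc) := by
    ext k
    rw [coeff_mk, coeff_ev]
    by_cases hk : k % 2 = 0
    · rw [if_pos hk]
      by_cases h0 : k = 0
      · subst h0
        rw [if_neg (by omega)]
        simp [coeff_zero_eq_constantCoeff]
      · have hsplit : k / 2 = (k-2)/2 + 1 := by omega
        rw [hsplit, coeff_succ_X_mul, hDc, coeff_mk, if_pos ⟨by omega, hk⟩]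
    · rw [if_neg hk, if_neg (by omega)]
  rw [h1, h2]
  calc ev Cc * (1 - ev (X * Dc) * C x)
      = ev Cc * (ev 1 - ev (C x) * ev (X * Dc)) := by
        rw [ev_one, ev_C, mul_comm (C x)]
    _ = ev (Cc * (1 - C x * (X * Dc))) := by rw [← ev_mul, ← ev_sub, ← ev_mul]
    _ = ev 1 := by rw [umain x y z]
    _ = 1 := ev_one


lemma Spoly_swap_xy (n Nx Ny Nz : ℕ) : Spoly x y z n Nx Ny Nz = Spoly y x z n Ny Nx Nz := by
  rw [Spoly_eq, Spoly_eq]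
  congr 1
  ring

lemma Spoly_swap_xz (n Nx Ny Nz : ℕ) : Spoly x y z n Nx Ny Nz = Spoly z y x n Nz Ny Nx := by
  rw [Spoly_eq, Spoly_eq]
  congr 1
  ring

lemma Rpoly_010 (n : ℕ) : Rpoly x y z n 0 1 0 = Rpoly y x z n 1 0 0 := by
  unfold Rpoly
  rw [Spoly_swap_xy x y z, Spoly_swap_xy x y z, Spoly_swap_xy x y z, Spoly_swap_xy x y z]
  ring

lemma Rpoly_001 (n : ℕ) : Rpoly x y z n 0 0 1 = Rpoly z y x n 1 0 0 := by
  unfold Rpoly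
  rw [Spoly_swap_xz x y z, Spoly_swap_xz x y z, Spoly_swap_xz x y z, Spoly_swap_xz x y z]
  ring

lemma Rpoly_111_xy (n : ℕ) : Rpoly x y z n 1 1 1 = Rpoly y x z n 1 1 1 := by
  unfold Rpoly
  rw [Spoly_swap_xy x y z, Spoly_swap_xy x y z, Spoly_swap_xy x y z, Spoly_swap_xy x y z]
  ring

lemma Rpoly_111_xz (n : ℕ) : Rpoly x y z n 1 1 1 = Rpoly z y x n 1 1 1 := by
  unfold Rpoly
  rw [Spoly_swap_xz x y z, Spoly_swap_xz x y z, Spoly_swap_xz x y z, Spoly_swap_xz x y z]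
  ring

lemma map_Spoly {B : Type*} [CommRing B] (φ : A →+* B) (n Nx Ny Nz : ℕ) :
    φ (Spoly x y z n Nx Ny Nz) = Spoly (φ x) (φ y) (φ z) n Nx Ny Nz := by
  unfold Spoly
  rw [map_sum]
  apply Finset.sum_congr rfl
  intro a _
  rw [map_sum]
  apply Finset.sum_congr rfl
  intro b _
  simp [map_mul, map_pow, map_natCast]

lemma map_Rpoly {B : Type*} [CommRing B] (φ : A →+* B) (n Nx Ny Nz : ℕ) :
    φ (Rpoly x y z n Nx Ny Nz) = Rpoly (φ x) (φ y) (φ z) n Nx Ny Nz := by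
  unfold Rpoly
  rw [map_sub, map_sub, map_sub, map_mul, map_ofNat,
    map_Spoly, map_Spoly, map_Spoly, map_Spoly]


lemma mapped_main {R : Type*} [CommRing R] (φ : MvPolynomial (Fin 3) ℤ →+* R)
    (a b c : MvPolynomial (Fin 3) ℤ) :
    (PowerSeries.mk fun k =>
        if k % 2 = 0 then Rpoly (φ a) (φ b) (φ c) (k/2) 1 0 0 else 0 : PowerSeries R)
      * (1 - (PowerSeries.mk fun k =>
            if 2 ≤ k ∧ k % 2 = 0 then Rpoly (φ a) (φ b) (φ c) ((k-2)/2) 1 1 1 else 0)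
          * C (φ a)) = 1 := by
  have h := congrArg (PowerSeries.map φ) (main_assembled a b c)
  rw [map_one, map_mul, map_sub, map_one, map_mul] at h
  have e1 : PowerSeries.map φ
      (PowerSeries.mk fun k => if k % 2 = 0 then Rpoly a b c (k/2) 1 0 0 else 0)
      = PowerSeries.mk fun k => if k % 2 = 0 then Rpoly (φ a) (φ b) (φ c) (k/2) 1 0 0 else 0 := by
    ext k
    rw [PowerSeries.coeff_map, coeff_mk, coeff_mk]
    split_ifs
    · exact map_Rpoly a b c φ _ _ _ _
    · exact map_zero φ
  have e2 : PowerSeries.map φ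
      (PowerSeries.mk fun k => if 2 ≤ k ∧ k % 2 = 0 then Rpoly a b c ((k-2)/2) 1 1 1 else 0)
      = PowerSeries.mk fun k =>
          if 2 ≤ k ∧ k % 2 = 0 then Rpoly (φ a) (φ b) (φ c) ((k-2)/2) 1 1 1 else 0 := by
    ext k
    rw [PowerSeries.coeff_map, coeff_mk, coeff_mk]
    split_ifs
    · exact map_Rpoly a b c φ _ _ _ _
    · exact map_zero φ
  have e3 : PowerSeries.map φ (C a) = C (φ a) := by
    simp
  rw [e1, e2, e3] at h
  exact h

end Aux


/-- `f_α(s) (1 - ω(s) J_α^2) = 1` for each `α ∈ {X, Y, Z}`. -/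
theorem stmt15 {R : Type*} [CommRing R] (JX JY JZ : R) :
    fX JX JY JZ * (1 - omegaPS JX JY JZ * PowerSeries.C (JX ^ 2)) = 1 ∧
    fY JX JY JZ * (1 - omegaPS JX JY JZ * PowerSeries.C (JY ^ 2)) = 1 ∧
    fZ JX JY JZ * (1 - omegaPS JX JY JZ * PowerSeries.C (JZ ^ 2)) = 1 := by
  set φ : MvPolynomial (Fin 3) ℤ →+* R :=
    MvPolynomial.eval₂Hom (Int.castRingHom R) ![JX^2, JY^2, JZ^2] with hφ
  have hv0 : φ (MvPolynomial.X 0) = JX^2 := by simp [hφ]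
  have hv1 : φ (MvPolynomial.X 1) = JY^2 := by simp [hφ]
  have hv2 : φ (MvPolynomial.X 2) = JZ^2 := by simp [hφ]
  refine ⟨?_, ?_, ?_⟩
  · have h := Aux.mapped_main φ (MvPolynomial.X 0) (MvPolynomial.X 1) (MvPolynomial.X 2)
    rw [hv0, hv1, hv2] at h
    exact h
  · have h := Aux.mapped_main φ (MvPolynomial.X 1) (MvPolynomial.X 0) (MvPolynomial.X 2)
    rw [hv0, hv1, hv2] at h
    have hfY : fY JX JY JZ = PowerSeries.mk fun k =>
        if k % 2 = 0 then Rpoly (JY^2) (JX^2) (JZ^2) (k/2) 1 0 0 else 0 := by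
      unfold fY
      ext k
      rw [coeff_mk, coeff_mk]
      split_ifs
      · exact Aux.Rpoly_010 _ _ _ _
      · rfl
    have hω : omegaPS JX JY JZ = PowerSeries.mk fun k =>
        if 2 ≤ k ∧ k % 2 = 0 then Rpoly (JY^2) (JX^2) (JZ^2) ((k-2)/2) 1 1 1 else 0 := by
      unfold omegaPS
      ext k
      rw [coeff_mk, coeff_mk]
      split_ifs
      · exact Aux.Rpoly_111_xy _ _ _ _
      · rfl
    rw [hfY, hω]
    exact h
  · have h := Aux.mapped_main φ (MvPolynomial.X 2) (MvPolynomial.X 1) (MvPolynomial.X 0)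
    rw [hv0, hv1, hv2] at h
    have hfZ : fZ JX JY JZ = PowerSeries.mk fun k =>
        if k % 2 = 0 then Rpoly (JZ^2) (JY^2) (JX^2) (k/2) 1 0 0 else 0 := by
      unfold fZ
      ext k
      rw [coeff_mk, coeff_mk]
      split_ifs
      · exact Aux.Rpoly_001 _ _ _ _
      · rfl
    have hω : omegaPS JX JY JZ = PowerSeries.mk fun k =>
        if 2 ≤ k ∧ k % 2 = 0 then Rpoly (JZ^2) (JY^2) (JX^2) ((k-2)/2) 1 1 1 else 0 := by
      unfold omegaPS
      ext k
      rw [coeff_mk, coeff_mk]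
      split_ifs
      · exact Aux.Rpoly_111_xz _ _ _ _
      · rfl
    rw [hfZ, hω]
    exact h
end

section
/- The power series \omega(s) defined from the coefficients R^n(1,1,1) satisfies the quartic functional equation \omega(s)(1 - J_X^2 \omega(s))(1 - J_Y^2 \omega(s))(1 - J_Z^2 \omega(s)) = s^2 as formal power series in s. -/
-- ===================== auxiliary development =====================
open Finset PowerSeries

section
lemma Scoef_zero_right (N : ℕ) : Scoef N 0 = 1 := by simp [Scoef]

lemma Scoef_one_left (k : ℕ) : Scoef 1 k = 1 := by simp [Scoef]

lemma Scoef_zero_left (k : ℕ) : Scoef 0 k = if k = 0 then 1 else 0 := by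
  rcases k with _ | k
  · simp [Scoef]
  · simp [Scoef, Nat.choose_eq_zero_of_lt (by omega : k + 1 - 1 < k + 1)]

lemma Scoef_symm (M a : ℕ) : (a + M).choose a = (a + M).choose M := by
  have h := Nat.choose_symm (show a ≤ a + M by omega)
  rw [show a + M - a = M by omega] at h
  exact h.symm

lemma Scoef_succ_sum (N n : ℕ) : ∑ a ∈ range (n+1), Scoef N a = Scoef (N+1) n := by
  rcases N with _ | M
  · rw [Finset.sum_congr rfl fun a _ => Scoef_zero_left a]
    simp [Scoef_one_left, Finset.sum_ite_eq']
  · have : ∀ a, Scoef (M+1) a = (a + M).choose M := by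
      intro a
      simp only [Scoef, show a + (M+1) - 1 = a + M by omega]
      exact Scoef_symm M a
    rw [Finset.sum_congr rfl fun a _ => this a, Nat.sum_range_add_choose]
    simp only [Scoef, show n + (M+1+1) - 1 = n + (M+1) by omega]
    exact (Scoef_symm (M+1) n).symm

/-- triangle reindexing -/
lemma tri_sum {M : Type*} [AddCommMonoid M] (m : ℕ) (H : ℕ → ℕ → M) :
    ∑ t ∈ range (m+1), ∑ k ∈ range (t+1), H k (t - k)
      = ∑ a ∈ range (m+1), ∑ b ∈ range (m+1-a), H a b := by
  rw [Finset.sum_sigma', Finset.sum_sigma']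
  refine Finset.sum_nbij' (fun p => ⟨p.2, p.1 - p.2⟩) (fun p => ⟨p.1 + p.2, p.1⟩) ?_ ?_ ?_ ?_ ?_
  · intro p hp
    simp only [Finset.mem_sigma, Finset.mem_range] at *
    omega
  · intro p hp
    simp only [Finset.mem_sigma, Finset.mem_range] at *
    omega
  · rintro ⟨t, k⟩ hp
    simp only [Finset.mem_sigma, Finset.mem_range] at hp
    have : k + (t - k) = t := by omega
    simp [this]
  · rintro ⟨a, b⟩ hp
    simp
  · intro p hp
    rfl

end

section
variable {K : Type*} [CommRing K]

noncomputable def pcomp (f g : K⟦X⟧) : K⟦X⟧ :=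
  PowerSeries.mk fun m => ∑ k ∈ range (m+1), coeff k f * coeff m (g ^ k)

lemma coeff_pcomp (f g : K⟦X⟧) (m : ℕ) :
    coeff m (pcomp f g) = ∑ k ∈ range (m+1), coeff k f * coeff m (g ^ k) :=
  coeff_mk _ _

lemma coeff_pow_eq_zero {g : K⟦X⟧} (hg : constantCoeff g = 0) {m k : ℕ} (h : m < k) :
    coeff m (g ^ k) = 0 := by
  obtain ⟨u, hu⟩ := X_dvd_iff.mpr hg
  rw [hu, mul_pow, coeff_X_pow_mul', if_neg (by omega)]

lemma coeff_pow_self {g : K⟦X⟧} (hg : constantCoeff g = 0) (m : ℕ) :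
    coeff m (g ^ m) = (coeff 1 g) ^ m := by
  obtain ⟨u, hu⟩ := X_dvd_iff.mpr hg
  rw [hu, mul_pow, coeff_X_pow_mul', if_pos le_rfl, Nat.sub_self,
    coeff_zero_eq_constantCoeff, map_pow]
  congr 1
  rw [show (1:ℕ) = 0 + 1 from rfl, coeff_succ_X_mul, coeff_zero_eq_constantCoeff]

lemma coeff_pcomp_of_le {g : K⟦X⟧} (hg : constantCoeff g = 0) (f : K⟦X⟧) {m M : ℕ}
    (h : m + 1 ≤ M) :
    coeff m (pcomp f g) = ∑ k ∈ range M, coeff k f * coeff m (g ^ k) := by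
  rw [coeff_pcomp]
  refine Finset.sum_subset (Finset.range_subset_range.mpr h) fun k hk hnk => ?_
  rw [coeff_pow_eq_zero hg (by simp at hk hnk; omega), mul_zero]

lemma constantCoeff_pcomp (f g : K⟦X⟧) :
    constantCoeff (pcomp f g) = constantCoeff f := by
  rw [← coeff_zero_eq_constantCoeff, coeff_pcomp]
  simp

lemma pcomp_one (g : K⟦X⟧) : pcomp 1 g = 1 := by
  ext m
  rw [coeff_pcomp, Finset.sum_eq_single 0]
  · simp
  · intro k hk hne
    rw [coeff_one, if_neg hne, zero_mul]
  · simp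

lemma pcomp_C (a : K) (g : K⟦X⟧) : pcomp (C a) g = C a := by
  ext m
  rw [coeff_pcomp, Finset.sum_eq_single 0]
  · rcases m with _ | m <;> simp [coeff_C]
  · intro k hk hne
    rw [coeff_C, if_neg hne, zero_mul]
  · simp

lemma pcomp_X {g : K⟦X⟧} (hg : constantCoeff g = 0) : pcomp X g = g := by
  ext m
  rcases m with _ | m
  · rw [coeff_pcomp]
    simp [hg]
  · rw [coeff_pcomp, Finset.sum_eq_single 1]
    · simp
    · intro k hk hne
      rw [coeff_X, if_neg hne, zero_mul]
    · intro h
      simp at h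

lemma pcomp_add (f₁ f₂ g : K⟦X⟧) : pcomp (f₁ + f₂) g = pcomp f₁ g + pcomp f₂ g := by
  ext m
  simp [coeff_pcomp, add_mul, Finset.sum_add_distrib]

lemma pcomp_sub (f₁ f₂ g : K⟦X⟧) : pcomp (f₁ - f₂) g = pcomp f₁ g - pcomp f₂ g := by
  ext m
  simp [coeff_pcomp, sub_mul, Finset.sum_sub_distrib]

lemma pcomp_mul {g : K⟦X⟧} (hg : constantCoeff g = 0) (f₁ f₂ : K⟦X⟧) :
    pcomp (f₁ * f₂) g = pcomp f₁ g * pcomp f₂ g := by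
  ext m
  set F : ℕ → ℕ → K := fun a b => coeff a f₁ * coeff b f₂ * coeff m (g ^ (a + b)) with hF
  calc coeff m (pcomp (f₁ * f₂) g)
      = ∑ t ∈ range (m+1), ∑ k ∈ range (t+1), F k (t - k) := by
        rw [coeff_pcomp]
        refine Finset.sum_congr rfl fun t ht => ?_
        rw [coeff_mul, Finset.Nat.sum_antidiagonal_eq_sum_range_succ_mk, Finset.sum_mul]
        refine Finset.sum_congr rfl fun k hk => ?_
        have hk' : k ≤ t := by have := Finset.mem_range.mp hk; omega
        simp only [hF]
        rw [show k + (t - k) = t by omega]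
    _ = ∑ a ∈ range (m+1), ∑ b ∈ range (m+1-a), F a b := tri_sum m F
    _ = ∑ a ∈ range (m+1), ∑ b ∈ range (m+1), F a b := by
        refine Finset.sum_congr rfl fun a ha => ?_
        refine Finset.sum_subset (Finset.range_subset_range.mpr (by omega)) fun b hb hnb => ?_
        have ha' : a ≤ m := by have := Finset.mem_range.mp ha; omega
        have : m < a + b := by simp at hb hnb; omega
        simp only [hF]
        rw [coeff_pow_eq_zero hg this, mul_zero]
    _ = coeff m (pcomp f₁ g * pcomp f₂ g) := by
        rw [coeff_mul, Finset.Nat.sum_antidiagonal_eq_sum_range_succ_mk]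
        have step : ∀ i ∈ range (m+1),
            coeff i (pcomp f₁ g) * coeff (m-i) (pcomp f₂ g)
              = ∑ a ∈ range (m+1), ∑ b ∈ range (m+1),
                  (coeff a f₁ * coeff i (g^a)) * (coeff b f₂ * coeff (m-i) (g^b)) := by
          intro i hi
          have hi' : i ≤ m := by have := Finset.mem_range.mp hi; omega
          rw [coeff_pcomp_of_le hg f₁ (by omega : i + 1 ≤ m+1),
            coeff_pcomp_of_le hg f₂ (by omega : (m-i) + 1 ≤ m+1), Finset.sum_mul_sum]
        rw [Finset.sum_congr rfl step]
        symm
        rw [Finset.sum_comm]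
        refine Finset.sum_congr rfl fun a ha => ?_
        rw [Finset.sum_comm]
        refine Finset.sum_congr rfl fun b hb => ?_
        simp only [hF]
        rw [pow_add, coeff_mul, Finset.Nat.sum_antidiagonal_eq_sum_range_succ_mk, Finset.mul_sum]
        refine Finset.sum_congr rfl fun i hi => ?_
        ring

lemma pcomp_pow {g : K⟦X⟧} (hg : constantCoeff g = 0) (f : K⟦X⟧) (k : ℕ) :
    (pcomp f g) ^ k = pcomp (f ^ k) g := by
  induction k with
  | zero => simp [pcomp_one]
  | succ k ih => rw [pow_succ, ih, pow_succ, pcomp_mul hg]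

lemma pcomp_assoc {g h : K⟦X⟧} (hg : constantCoeff g = 0) (hh : constantCoeff h = 0)
    (f : K⟦X⟧) : pcomp (pcomp f g) h = pcomp f (pcomp g h) := by
  have hgh : constantCoeff (pcomp g h) = 0 := by rw [constantCoeff_pcomp, hg]
  ext m
  rw [coeff_pcomp, coeff_pcomp]
  calc ∑ j ∈ range (m+1), coeff j (pcomp f g) * coeff m (h ^ j)
      = ∑ j ∈ range (m+1), ∑ k ∈ range (m+1),
          coeff k f * coeff j (g ^ k) * coeff m (h ^ j) := by
        refine Finset.sum_congr rfl fun j hj => ?_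
        rw [coeff_pcomp_of_le hg f (show j + 1 ≤ m + 1 by have := Finset.mem_range.mp hj; omega), Finset.sum_mul]
    _ = ∑ k ∈ range (m+1), coeff k f * coeff m ((pcomp g h) ^ k) := by
        rw [Finset.sum_comm]
        refine Finset.sum_congr rfl fun k hk => ?_
        rw [pcomp_pow hh, coeff_pcomp_of_le hh (g ^ k) (show m + 1 ≤ m + 1 from le_rfl),
          Finset.mul_sum]
        refine Finset.sum_congr rfl fun j hj => ?_
        ring

lemma pcomp_right_X (f : K⟦X⟧) : pcomp f X = f := by
  ext m
  rw [coeff_pcomp, Finset.sum_eq_single m]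
  · rw [← pow_one (X : K⟦X⟧), ← pow_mul, one_mul, coeff_X_pow, if_pos rfl, mul_one]
  · intro k hk hne
    rw [← pow_one (X : K⟦X⟧), ← pow_mul, one_mul, coeff_X_pow, if_neg (fun h => hne h.symm), mul_zero]
  · simp

noncomputable def linv (g : K⟦X⟧) : ℕ → K
  | m => (if m = 1 then 1 else 0)
      - ∑ k ∈ (Finset.range m).attach, linv g k * coeff m (g ^ (k : ℕ))
  decreasing_by exact Finset.mem_range.mp k.2

lemma linv_spec {g : K⟦X⟧} (hg : constantCoeff g = 0) (hg1 : coeff 1 g = 1) (m : ℕ) :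
    ∑ k ∈ range (m+1), linv g k * coeff m (g ^ k) = if m = 1 then 1 else 0 := by
  rw [Finset.sum_range_succ, coeff_pow_self hg, hg1, one_pow, mul_one, linv]
  rw [Finset.sum_attach (range m) (fun k => linv g k * coeff m (g ^ k))]
  ring

lemma pcomp_linv {g : K⟦X⟧} (hg : constantCoeff g = 0) (hg1 : coeff 1 g = 1) :
    pcomp (PowerSeries.mk (linv g)) g = X := by
  ext m
  rw [coeff_pcomp]
  simp only [coeff_mk]
  rw [linv_spec hg hg1, coeff_X]

-- dependence lemma
lemma coeff_pow_congr {g h : K⟦X⟧} (hg : constantCoeff g = 0) (hh : constantCoeff h = 0)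
    {m : ℕ} (agree : ∀ j, 1 ≤ j → j ≤ m - 1 → coeff j g = coeff j h) :
    ∀ k, 2 ≤ k → coeff m (g ^ k) = coeff m (h ^ k) := by
  -- first: agreement below m for all powers ≥ 1
  have main : ∀ k, 1 ≤ k → ∀ j, j ≤ m - 1 → coeff j (g ^ k) = coeff j (h ^ k) := by
    intro k
    induction k with
    | zero => omega
    | succ k ih =>
        intro _ j hj
        rcases Nat.eq_zero_or_pos k with rfl | hk
        · simp only [zero_add, pow_one]
          rcases Nat.eq_zero_or_pos j with rfl | hj1
          · rw [coeff_zero_eq_constantCoeff, hg, hh]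
          · exact agree j hj1 hj
        · rw [pow_succ, pow_succ, coeff_mul, coeff_mul,
            Finset.Nat.sum_antidiagonal_eq_sum_range_succ_mk,
            Finset.Nat.sum_antidiagonal_eq_sum_range_succ_mk]
          refine Finset.sum_congr rfl fun i hi => ?_
          have hi' : i ≤ j := by have := Finset.mem_range.mp hi; omega
          have h1 : coeff i (g ^ k) = coeff i (h ^ k) := ih hk i (by omega)
          have h2 : coeff (j - i) g = coeff (j - i) h := by
            rcases Nat.eq_zero_or_pos (j - i) with he | hpos
            · rw [he, coeff_zero_eq_constantCoeff, hg, hh]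
            · exact agree _ hpos (by omega)
          rw [h1, h2]
  intro k hk2
  obtain ⟨k', rfl⟩ : ∃ k', k = k' + 1 := ⟨k - 1, by omega⟩
  rw [pow_succ, pow_succ, coeff_mul, coeff_mul,
    Finset.Nat.sum_antidiagonal_eq_sum_range_succ_mk,
    Finset.Nat.sum_antidiagonal_eq_sum_range_succ_mk]
  refine Finset.sum_congr rfl fun i hi => ?_
  have hi' : i ≤ m := by have := Finset.mem_range.mp hi; omega
  rcases Nat.eq_zero_or_pos i with rfl | hipos
  · rw [coeff_pow_eq_zero hg (show 0 < k' by omega), coeff_pow_eq_zero hh (show 0 < k' by omega),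
      zero_mul, zero_mul]
  rcases Nat.eq_or_lt_of_le hi' with rfl | hlt
  · -- i = m : second factor at index 0, equal by const coeff; first factors: coeff_m g^k' vs h^k':
    rw [Nat.sub_self, coeff_zero_eq_constantCoeff, hg, hh, mul_zero, mul_zero]
  · have h1 : coeff i (g ^ k') = coeff i (h ^ k') := main k' (by omega) i (by omega)
    have h2 : coeff (m - i) g = coeff (m - i) h := by
      rcases Nat.eq_zero_or_pos (m - i) with he | hpos
      · rw [he, coeff_zero_eq_constantCoeff, hg, hh]
      · exact agree _ hpos (by omega)
    rw [h1, h2]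

-- injectivity of composition on the right
lemma pcomp_right_inj {f q r : K⟦X⟧} (hf1 : coeff 1 f = 1)
    (hq : constantCoeff q = 0) (hr : constantCoeff r = 0)
    (heq : pcomp f q = pcomp f r) : q = r := by
  ext m
  induction m using Nat.strong_induction_on with
  | _ m ih =>
    rcases Nat.eq_zero_or_pos m with rfl | hm
    · rw [coeff_zero_eq_constantCoeff_apply, coeff_zero_eq_constantCoeff_apply, hq, hr]
    · have hc := congrArg (coeff m) heq
      rw [coeff_pcomp, coeff_pcomp] at hc
      have agree : ∀ j, 1 ≤ j → j ≤ m - 1 → coeff j q = coeff j r := fun j h1 h2 =>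
        ih j (by omega)
      have hterm : ∀ k ∈ range (m+1), k ≠ 1 →
          coeff k f * coeff m (q ^ k) = coeff k f * coeff m (r ^ k) := by
        intro k hk hne
        rcases Nat.eq_zero_or_pos k with rfl | hkpos
        · rw [pow_zero, pow_zero]
        · have hk2 : 2 ≤ k := by omega
          rw [coeff_pow_congr hq hr agree k hk2]
      have h1m : 1 ∈ range (m+1) := by simp; omega
      rw [← Finset.add_sum_erase _ _ h1m, ← Finset.add_sum_erase _ _ h1m] at hc
      have hsum : ∑ k ∈ (range (m+1)).erase 1, coeff k f * coeff m (q ^ k)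
          = ∑ k ∈ (range (m+1)).erase 1, coeff k f * coeff m (r ^ k) := by
        refine Finset.sum_congr rfl fun k hk => ?_
        exact hterm k (Finset.mem_of_mem_erase hk) (Finset.ne_of_mem_erase hk)
      rw [hsum] at hc
      have := add_right_cancel hc
      rw [hf1, pow_one, pow_one, one_mul, one_mul] at this
      exact this

lemma linv_zero (g : K⟦X⟧) : linv g 0 = 0 := by
  rw [linv]
  simp

end

section
variable {K : Type*} [CommRing K]

noncomputable def Gser (α : K) (N : ℕ) : PowerSeries K :=
  PowerSeries.mk fun k => (Scoef N k : K) * α ^ k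

@[simp] lemma coeff_Gser (α : K) (N k : ℕ) :
    coeff k (Gser α N) = (Scoef N k : K) * α ^ k := coeff_mk _ _

lemma Gser_zero (α : K) : Gser α 0 = 1 := by
  ext k
  simp [Scoef_zero_left, coeff_one]
  split <;> simp_all

lemma constantCoeff_Gser (α : K) (N : ℕ) : constantCoeff (Gser α N) = 1 := by
  rw [← coeff_zero_eq_constantCoeff]
  simp [Scoef_zero_right]

lemma one_sub_mul_Gser_one (α : K) : (1 - C α * X) * Gser α 1 = 1 := by
  ext n
  rcases n with _ | n
  · simp [Scoef_one_left, coeff_one, constantCoeff_Gser]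
  · rw [sub_mul, one_mul, map_sub]
    rw [mul_comm (C α) X, mul_assoc, coeff_succ_X_mul, coeff_C_mul]
    simp [Scoef_one_left, coeff_one, pow_succ, mul_comm]

lemma Gser_mul_Gser_one (α : K) (N : ℕ) : Gser α N * Gser α 1 = Gser α (N+1) := by
  ext n
  rw [coeff_mul, Finset.Nat.sum_antidiagonal_eq_sum_range_succ_mk]
  simp only [coeff_Gser, Scoef_one_left, Nat.cast_one, one_mul]
  calc ∑ i ∈ range (n+1), (Scoef N i : K) * α ^ i * α ^ (n - i)
      = ∑ i ∈ range (n+1), (Scoef N i : K) * α ^ n := by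
        refine Finset.sum_congr rfl fun i hi => ?_
        rw [mul_assoc, ← pow_add]
        congr 2
        have := Finset.mem_range.mp hi
        omega
    _ = (Scoef (N+1) n : K) * α ^ n := by
        rw [← Finset.sum_mul, ← Nat.cast_sum, Scoef_succ_sum]

lemma one_sub_pow_mul_Gser (α : K) (N : ℕ) : (1 - C α * X) ^ N * Gser α N = 1 := by
  induction N with
  | zero => simp [Gser_zero]
  | succ N ih =>
      rw [← Gser_mul_Gser_one, pow_succ]
      calc (1 - C α * X) ^ N * (1 - C α * X) * (Gser α N * Gser α 1)
          = ((1 - C α * X) ^ N * Gser α N) * ((1 - C α * X) * Gser α 1) := by ring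
        _ = 1 := by rw [ih, one_sub_mul_Gser_one, one_mul]

end

section
variable {K : Type*} [CommRing K]
variable (x y z : K)

noncomputable def psiP : PowerSeries K := (1 - C x * X) * ((1 - C y * X) * (1 - C z * X))

noncomputable def PsiS (n : ℕ) : PowerSeries K := Gser x n * (Gser y n * Gser z n)

noncomputable def Pser : PowerSeries K := X * psiP x y z

lemma psiP_pow_mul_PsiS (n : ℕ) : psiP x y z ^ n * PsiS x y z n = 1 := by
  have : psiP x y z ^ n * PsiS x y z n =
      ((1 - C x * X) ^ n * Gser x n) *
        (((1 - C y * X) ^ n * Gser y n) * ((1 - C z * X) ^ n * Gser z n)) := by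
    simp only [psiP, PsiS, mul_pow]; ring
  rw [this, one_sub_pow_mul_Gser, one_sub_pow_mul_Gser, one_sub_pow_mul_Gser]; ring

lemma PsiS_mul_PsiS_one (n : ℕ) : PsiS x y z n * PsiS x y z 1 = PsiS x y z (n+1) := by
  have : PsiS x y z n * PsiS x y z 1 =
      (Gser x n * Gser x 1) * ((Gser y n * Gser y 1) * (Gser z n * Gser z 1)) := by
    simp only [PsiS]; ring
  rw [this, Gser_mul_Gser_one, Gser_mul_Gser_one, Gser_mul_Gser_one]; rfl

lemma psiP_mul_PsiS_succ (n : ℕ) : psiP x y z * PsiS x y z (n+1) = PsiS x y z n := by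
  have h1 := psiP_pow_mul_PsiS x y z (n+1)
  have h2 := psiP_pow_mul_PsiS x y z n
  calc psiP x y z * PsiS x y z (n+1)
      = (psiP x y z * PsiS x y z (n+1)) * (psiP x y z ^ n * PsiS x y z n) := by rw [h2, mul_one]
    _ = (psiP x y z ^ (n+1) * PsiS x y z (n+1)) * PsiS x y z n := by ring
    _ = PsiS x y z n := by rw [h1, one_mul]

lemma psiP_pow_mul_PsiS_of_le {k n : ℕ} (h : k ≤ n) :
    psiP x y z ^ k * PsiS x y z n = PsiS x y z (n - k) := by
  induction k with
  | zero => simp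
  | succ k ih =>
      have hk : k ≤ n := by omega
      obtain ⟨m, hm⟩ : ∃ m, n - k = m + 1 := ⟨n - k - 1, by omega⟩
      rw [show n - (k+1) = m by omega]
      calc psiP x y z ^ (k+1) * PsiS x y z n
          = psiP x y z * (psiP x y z ^ k * PsiS x y z n) := by ring
        _ = psiP x y z * PsiS x y z (m+1) := by rw [ih hk, hm]
        _ = PsiS x y z m := psiP_mul_PsiS_succ x y z m

lemma constantCoeff_PsiS (n : ℕ) : constantCoeff (PsiS x y z n) = 1 := by
  simp [PsiS, map_mul, constantCoeff_Gser]

-- derivative identities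
local notation "dd" => d⁄dX K

lemma derivative_Pser : dd (Pser x y z) = psiP x y z + X * dd (psiP x y z) := by
  rw [Pser, Derivation.leibniz]
  simp [smul_eq_mul]
  ring

lemma smul_dpsi_PsiS (m : ℕ) :
    ((m+1 : ℕ) : K⟦X⟧) * (dd (psiP x y z) * PsiS x y z (m+2)) = - dd (PsiS x y z (m+1)) := by
  have h := psiP_pow_mul_PsiS x y z (m+1)
  have hd := congrArg (fun f => dd f) h
  simp only [Derivation.leibniz, Derivation.leibniz_pow, map_one, Derivation.map_one_eq_zero,
    smul_eq_mul, nsmul_eq_mul, Nat.add_sub_cancel] at hd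
  have h2 : psiP x y z ^ m * PsiS x y z (m+1) = PsiS x y z 1 := by
    have := psiP_pow_mul_PsiS_of_le x y z (show m ≤ m+1 by omega)
    simpa using this
  have h3 := PsiS_mul_PsiS_one x y z (m+1)
  push_cast at hd ⊢
  linear_combination (PsiS x y z (m+1)) * hd - (dd (PsiS x y z (m+1))) * h
    - ((m:K⟦X⟧)+1) * dd (psiP x y z) * PsiS x y z (m+1) * h2
    - ((m:K⟦X⟧)+1) * dd (psiP x y z) * h3

-- now the new material
lemma constantCoeff_psiP : constantCoeff (psiP x y z) = 1 := by
  simp [psiP]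

lemma constantCoeff_dPser : constantCoeff (dd (Pser x y z)) = 1 := by
  rw [derivative_Pser]
  simp [constantCoeff_psiP]

lemma F3 : coeff 0 (dd (Pser x y z) * PsiS x y z 1) = 1 := by
  rw [coeff_zero_eq_constantCoeff, map_mul, constantCoeff_dPser, constantCoeff_PsiS, one_mul]

lemma dPser_mul_PsiS (m : ℕ) : dd (Pser x y z) * PsiS x y z (m+2)
    = PsiS x y z (m+1) + X * (dd (psiP x y z) * PsiS x y z (m+2)) := by
  rw [derivative_Pser, add_mul]
  rw [psiP_mul_PsiS_succ]
  ring

lemma coeff_nat_mul (n : ℕ) (f : K⟦X⟧) (k : ℕ) :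
    coeff k (((n : ℕ) : K⟦X⟧) * f) = (n : K) * coeff k f := by
  rw [← map_natCast C n, coeff_C_mul]

variable [IsDomain K] [CharZero K]

lemma F2 (m : ℕ) : coeff (m+1) (dd (Pser x y z) * PsiS x y z (m+2)) = 0 := by
  have key : ((m+1 : ℕ) : K) * coeff (m+1) (dd (Pser x y z) * PsiS x y z (m+2)) = 0 := by
    rw [dPser_mul_PsiS, map_add, coeff_succ_X_mul, mul_add,
      ← coeff_nat_mul (m+1) (dd (psiP x y z) * PsiS x y z (m+2)) m,
      smul_dpsi_PsiS, map_neg, coeff_derivative]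
    push_cast
    ring
  have hne : ((m+1 : ℕ) : K) ≠ 0 := Nat.cast_ne_zero.mpr (by omega)
  exact (mul_eq_zero.mp key).resolve_left hne

section
variable {K : Type*} [CommRing K] (x y z : K)
local notation "dd" => d⁄dX K

lemma coeff_GGG (m Nx Ny Nz : ℕ) :
    coeff m (Gser x Nx * (Gser y Ny * Gser z Nz)) = Spoly x y z m Nx Ny Nz := by
  rw [coeff_mul, Finset.Nat.sum_antidiagonal_eq_sum_range_succ_mk]
  unfold Spoly
  refine Finset.sum_congr rfl fun a ha => ?_
  dsimp only
  have hle : a ≤ m := by have := Finset.mem_range.mp ha; omega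
  rw [coeff_mul, Finset.Nat.sum_antidiagonal_eq_sum_range_succ_mk, Finset.mul_sum]
  simp only [Nat.succ_eq_add_one]
  rw [show (m - a) + 1 = m + 1 - a by omega]
  refine Finset.sum_congr rfl fun b hb => ?_
  simp only [coeff_Gser]
  ring
end

section
variable {K : Type*} [CommRing K] (x y z : K)
local notation "dd" => d⁄dX K

lemma PsiS_zero : PsiS x y z 0 = 1 := by simp [PsiS, Gser_zero]

lemma psiP_mul_PsiS_one : psiP x y z * PsiS x y z 1 = 1 :=
  (psiP_mul_PsiS_succ x y z 0).trans (PsiS_zero x y z)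

lemma dpsiP : dd (psiP x y z) =
    -(C x) * ((1 - C y * X) * (1 - C z * X))
      + (1 - C x * X) * (-(C y) * (1 - C z * X) + (1 - C y * X) * (-(C z))) := by
  have h : ∀ a : K, dd (1 - C a * X) = -(C a) := by
    intro a
    rw [map_sub, Derivation.leibniz]
    simp [smul_eq_mul]
  simp only [psiP, Derivation.leibniz, smul_eq_mul, h]
  ring

variable [IsDomain K]

lemma psiP_ne_zero : psiP x y z ≠ 0 := by
  intro h
  have := constantCoeff_psiP x y z
  rw [h, map_zero] at this
  exact zero_ne_one this

lemma ALG : (4 : K⟦X⟧) - Gser x 1 - Gser y 1 - Gser z 1 = dd (Pser x y z) * PsiS x y z 1 := by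
  apply mul_left_cancel₀ (psiP_ne_zero x y z)
  have h2 : psiP x y z * (dd (Pser x y z) * PsiS x y z 1)
      = dd (Pser x y z) * (psiP x y z * PsiS x y z 1) := by ring
  rw [h2, psiP_mul_PsiS_one, mul_one, derivative_Pser, dpsiP]
  simp only [psiP]
  linear_combination (-((1 - C y * X) * (1 - C z * X))) * one_sub_mul_Gser_one x
    + (-((1 - C x * X) * (1 - C z * X))) * one_sub_mul_Gser_one y
    + (-((1 - C x * X) * (1 - C y * X))) * one_sub_mul_Gser_one z

lemma Rpoly_eq_coeff (m : ℕ) :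
    Rpoly x y z m 1 1 1 = coeff m (dd (Pser x y z) * PsiS x y z (m+2)) := by
  have key : dd (Pser x y z) * PsiS x y z (m+2)
      = 4 * PsiS x y z (m+1) - Gser x 1 * PsiS x y z (m+1)
        - Gser y 1 * PsiS x y z (m+1) - Gser z 1 * PsiS x y z (m+1) := by
    calc dd (Pser x y z) * PsiS x y z (m+2)
        = (dd (Pser x y z) * PsiS x y z 1) * PsiS x y z (m+1) := by
          rw [mul_assoc, mul_comm (PsiS x y z 1), PsiS_mul_PsiS_one]
      _ = ((4:K⟦X⟧) - Gser x 1 - Gser y 1 - Gser z 1) * PsiS x y z (m+1) := by rw [← ALG]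
      _ = _ := by ring
  rw [key]
  have c4 : ((4:K⟦X⟧)) = C 4 := (map_ofNat C 4).symm
  have hGx : Gser x 1 * PsiS x y z (m+1) = Gser x (m+2) * (Gser y (m+1) * Gser z (m+1)) := by
    rw [← Gser_mul_Gser_one x (m+1)]; unfold PsiS; ring
  have hGy : Gser y 1 * PsiS x y z (m+1) = Gser x (m+1) * (Gser y (m+2) * Gser z (m+1)) := by
    rw [← Gser_mul_Gser_one y (m+1)]; unfold PsiS; ring
  have hGz : Gser z 1 * PsiS x y z (m+1) = Gser x (m+1) * (Gser y (m+1) * Gser z (m+2)) := by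
    rw [← Gser_mul_Gser_one z (m+1)]; unfold PsiS; ring
  rw [map_sub, map_sub, map_sub, c4, coeff_C_mul, hGx, hGy, hGz]
  unfold PsiS
  rw [coeff_GGG, coeff_GGG, coeff_GGG, coeff_GGG]
  unfold Rpoly
  rw [show 1 + m = m + 1 by omega, show m + 1 + 1 = m + 2 by omega]

variable [CharZero K]

lemma smul_Rpoly (n : ℕ) :
    ((n+1:ℕ) : K) * Rpoly x y z n 1 1 1 = coeff n (PsiS x y z (n+1)) := by
  rcases n with _ | p
  · rw [Rpoly_eq_coeff]
    simp only [coeff_zero_eq_constantCoeff, map_mul, constantCoeff_dPser, constantCoeff_PsiS]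
    norm_num
  · rw [Rpoly_eq_coeff, dPser_mul_PsiS, map_add, coeff_succ_X_mul, mul_add,
      ← coeff_nat_mul (p+2) (dd (psiP x y z) * PsiS x y z (p+3)) p]
    rw [show ((p+1)+2 : ℕ) = (p+1)+1+1 from rfl] at *
    rw [show (dd (psiP x y z) * PsiS x y z (p+1+1+1)) = (dd (psiP x y z) * PsiS x y z ((p+1)+2)) from rfl,
      show ((p+2:ℕ) : K⟦X⟧) = (((p+1)+1:ℕ) : K⟦X⟧) from rfl, smul_dpsi_PsiS, map_neg, coeff_derivative]
    push_cast
    ring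

end

section
variable {K : Type*} [CommRing K] (x y z : K)
local notation "dd" => d⁄dX K

-- ============ new material ============

noncomputable def Vser : K⟦X⟧ :=
  PowerSeries.mk fun n => if n = 0 then 0 else Rpoly x y z (n-1) 1 1 1

lemma constantCoeff_Pser : constantCoeff (Pser x y z) = 0 := by
  rw [Pser, map_mul, constantCoeff_X, zero_mul]

lemma coeff_one_Pser : coeff 1 (Pser x y z) = 1 := by
  rw [Pser, show (1:ℕ) = 0 + 1 from rfl, coeff_succ_X_mul, coeff_zero_eq_constantCoeff_apply,
    constantCoeff_psiP]

lemma coeff_dpow_Pser (k m : ℕ) :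
    coeff m (dd (Pser x y z ^ k)) = (k:K) * coeff m (Pser x y z ^ (k-1) * dd (Pser x y z)) := by
  rw [Derivation.leibniz_pow, smul_eq_mul, map_nsmul, nsmul_eq_mul]

section dom
variable [IsDomain K] [CharZero K]

lemma key_diag {k' n : ℕ} (hk' : k' ≤ n) :
    coeff n (Pser x y z ^ k' * (dd (Pser x y z) * PsiS x y z (n+1)))
      = if k' = n then 1 else 0 := by
  have h1 : Pser x y z ^ k' * (dd (Pser x y z) * PsiS x y z (n+1))
      = X ^ k' * (dd (Pser x y z) * PsiS x y z ((n - k') + 1)) := by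
    rw [show (n - k') + 1 = (n+1) - k' by omega, ← psiP_pow_mul_PsiS_of_le x y z (show k' ≤ n+1 by omega),
      Pser, mul_pow]
    ring
  rw [h1, coeff_X_pow_mul', if_pos (by omega : k' ≤ n)]
  rcases Nat.eq_or_lt_of_le hk' with rfl | hlt
  · rw [Nat.sub_self, F3, if_pos rfl]
  · rw [if_neg (by omega)]
    have h2 : n - k' = (n - k' - 1) + 1 := by omega
    rw [h2, show (n - k' - 1 + 1) + 1 = (n - k' - 1) + 2 by omega]
    exact F2 x y z _

lemma linv_Pser_succ (n : ℕ) :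
    ((n+1:ℕ) : K) * linv (Pser x y z) (n+1) = coeff n (PsiS x y z (n+1)) := by
  set a : ℕ → K := linv (Pser x y z) with ha
  have hP0 := constantCoeff_Pser x y z
  have hP1 := coeff_one_Pser x y z
  -- S2
  have S2 : ∀ m : ℕ, ∑ k ∈ range (m+2), a k * coeff m (dd (Pser x y z ^ k))
      = if m = 0 then 1 else 0 := by
    intro m
    have : ∀ k ∈ range (m+2), a k * coeff m (dd (Pser x y z ^ k))
        = (a k * coeff (m+1) (Pser x y z ^ k)) * ((m+1 : ℕ) : K) := by
      intro k hk
      rw [coeff_derivative]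
      push_cast
      ring
    rw [Finset.sum_congr rfl this, ← Finset.sum_mul, linv_spec hP0 hP1 (m+1)]
    rcases Nat.eq_zero_or_pos m with rfl | hm
    · norm_num
    · rw [if_neg (by omega), if_neg (by omega), zero_mul]
  -- T and its coefficients
  set T : K⟦X⟧ := ∑ k ∈ range (n+2), C ((k:K) * a k) * (Pser x y z ^ (k-1) * dd (Pser x y z))
    with hT
  have hTc : ∀ j, j ≤ n → coeff j T = if j = 0 then 1 else 0 := by
    intro j hj
    rw [hT, map_sum]
    have e1 : ∀ k ∈ range (n+2),
        coeff j (C ((k:K) * a k) * (Pser x y z ^ (k-1) * dd (Pser x y z)))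
          = a k * coeff j (dd (Pser x y z ^ k)) := by
      intro k hk
      rw [coeff_C_mul, coeff_dpow_Pser]
      ring
    rw [Finset.sum_congr rfl e1]
    rw [← S2 j]
    symm
    apply Finset.sum_subset (Finset.range_subset_range.mpr (by omega : j + 2 ≤ n + 2))
    intro k hk hnk
    have hk2 : j + 2 ≤ k := by simp at hnk hk ⊢; omega
    have : coeff j (Pser x y z ^ (k-1) * dd (Pser x y z)) = 0 := by
      rw [Pser, mul_pow, mul_assoc, coeff_X_pow_mul', if_neg (by omega)]
    rw [coeff_dpow_Pser, this, mul_zero, mul_zero]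
  -- way 1
  have way1 : coeff n (T * PsiS x y z (n+1)) = coeff n (PsiS x y z (n+1)) := by
    rw [coeff_mul, Finset.Nat.sum_antidiagonal_eq_sum_range_succ_mk]
    have hs := Finset.sum_eq_single (s := range (n+1))
      (f := fun i => coeff i T * coeff (n - i) (PsiS x y z (n+1))) 0
      (fun i hi hne => by
        rw [hTc i (by have := Finset.mem_range.mp hi; omega), if_neg hne, zero_mul])
      (fun h => absurd (Finset.mem_range.mpr (by omega)) h)
    rw [hs, hTc 0 (by omega), if_pos rfl, one_mul, Nat.sub_zero]
  -- way 2
  have way2 : coeff n (T * PsiS x y z (n+1)) = ((n+1:ℕ) : K) * a (n+1) := by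
    rw [hT, Finset.sum_mul, map_sum]
    have hs := Finset.sum_eq_single (s := range (n+2))
      (f := fun k => coeff n (C ((k:K) * a k) * (Pser x y z ^ (k-1) * dd (Pser x y z))
        * PsiS x y z (n+1))) (n+1)
      (fun k hk hne => by
        rcases Nat.eq_zero_or_pos k with rfl | hkpos
        · simp
        · obtain ⟨k', rfl⟩ : ∃ k', k = k' + 1 := ⟨k - 1, by omega⟩
          have hk' : k' ≤ n := by have := Finset.mem_range.mp hk; omega
          have hk'n : k' ≠ n := by intro h; exact hne (by omega)
          have e : C (((k'+1:ℕ):K) * a (k'+1)) * (Pser x y z ^ (k'+1-1) * dd (Pser x y z)) * PsiS x y z (n+1)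
              = C (((k'+1:ℕ):K) * a (k'+1)) * (Pser x y z ^ k' * (dd (Pser x y z) * PsiS x y z (n+1))) := by
            rw [show k'+1-1 = k' by omega]; ring
          push_cast at e ⊢
          rw [e, coeff_C_mul, key_diag x y z hk', if_neg hk'n, mul_zero])
      (fun h => absurd (Finset.mem_range.mpr (by omega)) h)
    rw [hs]
    · have e : C (((n+1:ℕ):K) * a (n+1)) * (Pser x y z ^ n * dd (Pser x y z)) * PsiS x y z (n+1)
          = C (((n+1:ℕ):K) * a (n+1)) * (Pser x y z ^ n * (dd (Pser x y z) * PsiS x y z (n+1))) := by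
        ring
      rw [show (n+1) - 1 = n by omega, e, coeff_C_mul, key_diag x y z (le_refl n), if_pos rfl,
        mul_one]
  rw [← way1, way2]

lemma linv_Pser_eq (n : ℕ) : linv (Pser x y z) n = coeff n (Vser x y z) := by
  rcases n with _ | n
  · rw [linv_zero, Vser, coeff_mk, if_pos rfl]
  · have h1 := linv_Pser_succ x y z n
    have h2 := smul_Rpoly x y z n
    have hne : ((n+1:ℕ) : K) ≠ 0 := Nat.cast_ne_zero.mpr (by omega)
    have := mul_left_cancel₀ hne (h1.trans h2.symm)
    rw [this, Vser, coeff_mk, if_neg (by omega), show n + 1 - 1 = n by omega]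

lemma coeff_one_Vser : coeff 1 (Vser x y z) = 1 := by
  rw [Vser, coeff_mk, if_neg one_ne_zero]
  have hS : ∀ N₁ N₂ N₃ : ℕ, Spoly x y z 0 N₁ N₂ N₃ = 1 := by
    intro N₁ N₂ N₃
    simp [Spoly, Scoef_zero_right]
  unfold Rpoly
  rw [hS, hS, hS, hS]
  ring

lemma constantCoeff_Vser : constantCoeff (Vser x y z) = 0 := by
  rw [← coeff_zero_eq_constantCoeff_apply, Vser, coeff_mk, if_pos rfl]

theorem core : Vser x y z * (1 - C x * Vser x y z) * (1 - C y * Vser x y z)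
    * (1 - C z * Vser x y z) = X := by
  have hP0 := constantCoeff_Pser x y z
  have hP1 := coeff_one_Pser x y z
  have hV0 := constantCoeff_Vser x y z
  have hV1 := coeff_one_Vser x y z
  have hmk : PowerSeries.mk (linv (Pser x y z)) = Vser x y z := by
    ext n; rw [coeff_mk, linv_Pser_eq]
  have hVP : pcomp (Vser x y z) (Pser x y z) = X := by
    rw [← hmk]; exact pcomp_linv hP0 hP1
  have hQ0 : constantCoeff (pcomp (Pser x y z) (Vser x y z)) = 0 := by
    rw [constantCoeff_pcomp, hP0]
  have hassoc := pcomp_assoc hP0 hV0 (Vser x y z)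
  rw [hVP, pcomp_X hV0] at hassoc
  -- hassoc : Vser = pcomp Vser (pcomp Pser Vser)
  have hXX : pcomp (Vser x y z) X = Vser x y z := pcomp_right_X _
  have hQ : pcomp (Pser x y z) (Vser x y z) = X := by
    refine pcomp_right_inj hV1 hQ0 constantCoeff_X ?_
    rw [← hassoc, hXX]
  have hfac : ∀ a : K, pcomp (1 - C a * X) (Vser x y z) = 1 - C a * Vser x y z := by
    intro a
    rw [pcomp_sub, pcomp_one, pcomp_mul hV0, pcomp_C, pcomp_X hV0]
  have hexp : pcomp (Pser x y z) (Vser x y z)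
      = Vser x y z * ((1 - C x * Vser x y z) * ((1 - C y * Vser x y z)
          * (1 - C z * Vser x y z))) := by
    rw [Pser, psiP, pcomp_mul hV0, pcomp_mul hV0, pcomp_mul hV0, pcomp_X hV0, hfac, hfac, hfac]
  rw [show Vser x y z * (1 - C x * Vser x y z) * (1 - C y * Vser x y z)
      * (1 - C z * Vser x y z)
      = Vser x y z * ((1 - C x * Vser x y z) * ((1 - C y * Vser x y z)
          * (1 - C z * Vser x y z))) by ring, ← hexp, hQ]
end dom
end

end

section transfer

lemma map_Spoly {A B : Type*} [CommRing A] [CommRing B] (φ : A →+* B) (x y z : A)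
    (n Nx Ny Nz : ℕ) : φ (Spoly x y z n Nx Ny Nz) = Spoly (φ x) (φ y) (φ z) n Nx Ny Nz := by
  simp [Spoly, map_sum, map_mul, map_pow, map_natCast]

lemma map_Rpoly {A B : Type*} [CommRing A] [CommRing B] (φ : A →+* B) (x y z : A)
    (n Nx Ny Nz : ℕ) : φ (Rpoly x y z n Nx Ny Nz) = Rpoly (φ x) (φ y) (φ z) n Nx Ny Nz := by
  simp only [Rpoly, map_sub, map_mul, map_Spoly, map_ofNat]

lemma map_Vser {A B : Type*} [CommRing A] [CommRing B] (φ : A →+* B) (x y z : A) :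
    PowerSeries.map φ (Vser x y z) = Vser (φ x) (φ y) (φ z) := by
  ext n
  rw [coeff_map, Vser, Vser, coeff_mk, coeff_mk]
  split
  · rw [map_zero]
  · rw [map_Rpoly]

theorem core' {R : Type*} [CommRing R] (x y z : R) :
    Vser x y z * (1 - C x * Vser x y z) * (1 - C y * Vser x y z)
    * (1 - C z * Vser x y z) = X := by
  classical
  set K := MvPolynomial (Fin 3) ℤ
  let φ : K →+* R := (MvPolynomial.aeval ![x, y, z] : K →ₐ[ℤ] R).toRingHom
  have h := core (MvPolynomial.X 0 : K) (MvPolynomial.X 1) (MvPolynomial.X 2)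
  have h2 := congrArg (PowerSeries.map φ) h
  simp only [map_mul, map_sub, map_one, PowerSeries.map_C, PowerSeries.map_X, map_Vser] at h2
  have e0 : φ (MvPolynomial.X 0) = x := by simp [φ, K]
  have e1 : φ (MvPolynomial.X 1) = y := by simp [φ, K]
  have e2 : φ (MvPolynomial.X 2) = z := by simp [φ, K]
  rwa [e0, e1, e2] at h2

end transfer

section evenize
variable {R : Type*} [CommRing R]

noncomputable def sqmap (f : R⟦X⟧) : R⟦X⟧ :=
  PowerSeries.mk fun k => if k % 2 = 0 then coeff (k/2) f else 0

lemma sum_even (h : ℕ → R) (m : ℕ) (hodd : ∀ i, i % 2 = 1 → h i = 0) :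
    ∑ i ∈ range (2*m+1), h i = ∑ p ∈ range (m+1), h (2*p) := by
  induction m with
  | zero => simp
  | succ m ih =>
      have l1 : ∑ i ∈ range (2*(m+1)+1), h i
          = ((∑ i ∈ range (2*m+1), h i) + h (2*m+1)) + h (2*m+1+1) := by
        rw [show 2*(m+1)+1 = (2*m+1+1)+1 by ring, Finset.sum_range_succ, Finset.sum_range_succ]
      have l2 : ∑ p ∈ range (m+1+1), h (2*p) = (∑ p ∈ range (m+1), h (2*p)) + h (2*(m+1)) :=
        Finset.sum_range_succ _ _
      rw [l1, l2, ih, hodd (2*m+1) (by omega), add_zero, show 2*m+1+1 = 2*(m+1) by ring]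

lemma coeff_sqmap (f : R⟦X⟧) (k : ℕ) :
    coeff k (sqmap f) = if k % 2 = 0 then coeff (k/2) f else 0 := coeff_mk _ _

lemma sqmap_mul (f g : R⟦X⟧) : sqmap (f * g) = sqmap f * sqmap g := by
  ext k
  rcases Nat.even_or_odd k with he | ho
  · obtain ⟨m, rfl⟩ : ∃ m, k = 2*m := ⟨k/2, by have := Nat.even_iff.mp he; omega⟩
    rw [coeff_sqmap, if_pos (by omega), show 2*m/2 = m by omega, coeff_mul, coeff_mul,
      Finset.Nat.sum_antidiagonal_eq_sum_range_succ_mk,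
      Finset.Nat.sum_antidiagonal_eq_sum_range_succ_mk]
    simp only [Nat.succ_eq_add_one]
    symm
    have hodd : ∀ i, i % 2 = 1 →
        coeff i (sqmap f) * coeff (2*m - i) (sqmap g) = 0 := by
      intro i hi
      rw [coeff_sqmap, if_neg (by omega), zero_mul]
    rw [sum_even _ m hodd]
    refine Finset.sum_congr rfl fun p hp => ?_
    have hp' : p ≤ m := by have := Finset.mem_range.mp hp; omega
    rw [coeff_sqmap, coeff_sqmap, if_pos (by omega), if_pos (by omega),
      show 2*p/2 = p by omega, show (2*m - 2*p)/2 = m - p by omega]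
  · have hk1 := Nat.odd_iff.mp ho
    rw [coeff_sqmap, if_neg (by omega)]
    symm
    rw [coeff_mul, Finset.Nat.sum_antidiagonal_eq_sum_range_succ_mk]
    refine Finset.sum_eq_zero fun i hi => ?_
    have hi' : i ≤ k := by have := Finset.mem_range.mp hi; omega
    dsimp only
    rcases Nat.even_or_odd i with hie | hio
    · have := Nat.even_iff.mp hie
      rw [coeff_sqmap, coeff_sqmap, if_neg (show ¬ (k - i) % 2 = 0 by omega), mul_zero]
    · have := Nat.odd_iff.mp hio
      rw [coeff_sqmap, if_neg (by omega), zero_mul]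

lemma sqmap_one : sqmap (1 : R⟦X⟧) = 1 := by
  ext k
  rw [coeff_sqmap]
  split
  · next h =>
      rw [coeff_one, coeff_one]
      by_cases h0 : k = 0
      · subst h0; norm_num
      · rw [if_neg (by omega), if_neg h0]
  · next h =>
      rw [coeff_one, if_neg (by omega)]

lemma sqmap_sub (f g : R⟦X⟧) : sqmap (f - g) = sqmap f - sqmap g := by
  ext k
  rw [map_sub, sqmap, coeff_mk, sqmap, coeff_mk, sqmap, coeff_mk]
  split
  · rw [map_sub]
  · rw [sub_zero]

lemma sqmap_C (a : R) : sqmap (C a) = C a := by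
  ext k
  rw [coeff_sqmap]
  split
  · next h =>
      rw [coeff_C, coeff_C]
      by_cases h0 : k = 0
      · subst h0; norm_num
      · rw [if_neg (by omega), if_neg h0]
  · next h =>
      rw [coeff_C, if_neg (by omega)]

lemma sqmap_X : sqmap (X : R⟦X⟧) = X ^ 2 := by
  ext k
  rw [sqmap, coeff_mk, coeff_X_pow]
  by_cases h2 : k = 2
  · subst h2
    rw [if_pos rfl, if_pos (by omega), show 2/2 = 1 by omega, coeff_X, if_pos rfl]
  · rw [if_neg h2]
    split
    · rw [coeff_X, if_neg (by omega)]
    · rfl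

end evenize

section final
variable {R : Type*} [CommRing R]

lemma omegaPS_eq (JX JY JZ : R) :
    omegaPS JX JY JZ = sqmap (Vser (JX^2) (JY^2) (JZ^2)) := by
  ext k
  rw [omegaPS, coeff_mk, coeff_sqmap, Vser, coeff_mk]
  by_cases hev : k % 2 = 0
  · by_cases h2 : 2 ≤ k
    · rw [if_pos ⟨h2, hev⟩, if_pos hev, if_neg (by omega), show k/2 - 1 = (k-2)/2 by omega]
    · rw [if_neg (by omega), if_pos hev, if_pos (by omega)]
  · rw [if_neg (by omega), if_neg hev]

theorem stmt17' {R : Type*} [CommRing R] (JX JY JZ : R) :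
    omegaPS JX JY JZ *
      (1 - PowerSeries.C (JX ^ 2) * omegaPS JX JY JZ) *
      (1 - PowerSeries.C (JY ^ 2) * omegaPS JX JY JZ) *
      (1 - PowerSeries.C (JZ ^ 2) * omegaPS JX JY JZ) = PowerSeries.X ^ 2 := by
  have hV := core' (JX^2) (JY^2) (JZ^2)
  have h := congrArg sqmap hV
  rw [sqmap_mul, sqmap_mul, sqmap_mul, sqmap_sub, sqmap_sub, sqmap_sub, sqmap_one,
    sqmap_mul, sqmap_mul, sqmap_mul, sqmap_C, sqmap_C, sqmap_C, sqmap_X] at h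
  rw [omegaPS_eq]
  exact h
end final

/-- The quartic functional equation
`ω(s)(1 - J_X^2 ω(s))(1 - J_Y^2 ω(s))(1 - J_Z^2 ω(s)) = s^2`. -/
theorem stmt17 {R : Type*} [CommRing R] (JX JY JZ : R) :
    omegaPS JX JY JZ *
      (1 - PowerSeries.C (JX ^ 2) * omegaPS JX JY JZ) *
      (1 - PowerSeries.C (JY ^ 2) * omegaPS JX JY JZ) *
      (1 - PowerSeries.C (JZ ^ 2) * omegaPS JX JY JZ) = PowerSeries.X ^ 2 := by
  have h := stmt17' JX JY JZ
  exact h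
end

section
/- Let \Gamma_2^i be the 4\times4 block matrix over the ring of operators on (\mathbb{C}^2)^{\otimes L} tensored with dual numbers (\epsilon^2 = 0), with entries (\Gamma_2^i)_{1,1} = I, first row (I, J_X X_i, J_Y Y_i, J_Z Z_i), first column below the diagonal (\epsilon X_i, \epsilon Y_i, \epsilon Z_i)^T, and all other entries zero. Then for L \ge 2, Tr_a[\Gamma_2^1 \Gamma_2^2 \cdots \Gamma_2^L] = I + \epsilon H, where H = \sum_{i=1}^{L} (J_X X_i X_{i+1} + J_Y Y_i Y_{i+1} + J_Z Z_i Z_{i+1}) is the periodic XYZ Hamiltonian. -/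
noncomputable section

open DualNumber TrivSqZeroExt

/-- Operators on the spin chain `(ℂ²)^{⊗L}`, modelled as matrices indexed by
spin configurations `Fin L → Fin 2`. -/
abbrev Op (L : ℕ) := Matrix (Fin L → Fin 2) (Fin L → Fin 2) ℂ

/-- The operator acting as the one-site matrix `A` on site `i` and as the identity
on all other sites. -/
def siteOp (L : ℕ) (A : Matrix (Fin 2) (Fin 2) ℂ) (i : Fin L) : Op L :=
  fun f g => (if ∀ j, j ≠ i → f j = g j then 1 else 0) * A (f i) (g i)

/-- Pauli matrix `X`. -/
def PX : Matrix (Fin 2) (Fin 2) ℂ := !![0, 1; 1, 0]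
/-- Pauli matrix `Y`. -/
def PY : Matrix (Fin 2) (Fin 2) ℂ := !![0, -Complex.I; Complex.I, 0]
/-- Pauli matrix `Z`. -/
def PZ : Matrix (Fin 2) (Fin 2) ℂ := !![1, 0; 0, -1]

/-- The periodic XYZ Hamiltonian. -/
def Ham (L : ℕ) [NeZero L] (JX JY JZ : ℂ) : Op L :=
  ∑ i : Fin L,
    (JX • (siteOp L PX i * siteOp L PX (i + 1)) +
     JY • (siteOp L PY i * siteOp L PY (i + 1)) +
     JZ • (siteOp L PZ i * siteOp L PZ (i + 1)))

/-- The `4 × 4` local tensor `Γ₂^i` of the MPO for the Hamiltonian, with entries in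
the dual numbers (`ε² = 0`) over the operator ring. -/
def Gamma2 (L : ℕ) [NeZero L] (JX JY JZ : ℂ) (i : Fin L) :
    Matrix (Fin 4) (Fin 4) (DualNumber (Op L)) :=
  Matrix.of
    ![![inl 1, inl (JX • siteOp L PX i), inl (JY • siteOp L PY i), inl (JZ • siteOp L PZ i)],
      ![ε * inl (siteOp L PX i), 0, 0, 0],
      ![ε * inl (siteOp L PY i), 0, 0, 0],
      ![ε * inl (siteOp L PZ i), 0, 0, 0]]

/-! ### Auxiliary material -/

section SiteOp

lemma siteOp_mul_apply (L : ℕ) (A B : Matrix (Fin 2) (Fin 2) ℂ) (i j : Fin L)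
    (hij : i ≠ j) (f g : Fin L → Fin 2) :
    (siteOp L A i * siteOp L B j) f g =
      (if ∀ k, k ≠ i → k ≠ j → f k = g k then 1 else 0) * (A (f i) (g i) * B (f j) (g j)) := by
  rw [Matrix.mul_apply]
  rw [Finset.sum_eq_single (Function.update g j (f j))]
  · simp only [siteOp, Function.update_apply, if_neg hij, if_pos rfl]
    have h2 : (∀ k, k ≠ j → (if k = j then f j else g k) = g k) := by
      intro k hk; rw [if_neg hk]
    rw [if_pos h2, one_mul]
    have h1 : (∀ k, k ≠ i → f k = (if k = j then f j else g k)) ↔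
        (∀ k, k ≠ i → k ≠ j → f k = g k) := by
      constructor
      · intro h k hki hkj; have := h k hki; rwa [if_neg hkj] at this
      · intro h k hki; by_cases hkj : k = j
        · subst hkj; simp
        · rw [if_neg hkj]; exact h k hki hkj
    rw [if_congr h1 rfl rfl, mul_assoc, if_pos trivial]
  · intro h _ hne
    simp only [siteOp]
    by_cases h1 : ∀ k, k ≠ i → f k = h k
    · by_cases h2 : ∀ k, k ≠ j → h k = g k
      · exfalso; apply hne; funext k
        by_cases hkj : k = j
        · subst hkj; rw [Function.update_self]; exact (h1 k (Ne.symm hij)).symm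
        · rw [Function.update_of_ne hkj]; exact h2 k hkj
      · rw [if_neg h2, zero_mul, mul_zero]
    · rw [if_neg h1, zero_mul, zero_mul]
  · intro hmem; exact absurd (Finset.mem_univ _) hmem

lemma siteOp_comm (L : ℕ) (A B : Matrix (Fin 2) (Fin 2) ℂ) (i j : Fin L) (hij : i ≠ j) :
    siteOp L A i * siteOp L B j = siteOp L B j * siteOp L A i := by
  ext f g
  rw [siteOp_mul_apply L A B i j hij f g, siteOp_mul_apply L B A j i hij.symm f g]
  have : (∀ k, k ≠ i → k ≠ j → f k = g k) ↔ (∀ k, k ≠ j → k ≠ i → f k = g k) := by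
    constructor <;> (intro h k h1 h2; exact h k h2 h1)
  rw [if_congr this rfl rfl]
  ring

end SiteOp

section MPO

variable {ι S : Type*} [Ring S]

def efun (r c : ι → Fin 4 → S) (s t : ι) : S := ∑ m : Fin 4, r s m * c t m

def wfun (r : ι → Fin 4 → S) : List ι → Fin 4 → S
  | [], b => if b = 0 then 1 else 0
  | t :: ts, b => r (ts.getLastD t) b

def gfun (r c : ι → Fin 4 → S) : ι → List ι → Fin 4 → S
  | _, [], _ => 0
  | hd, t :: ts, b => gfun r c t ts b + efun r c hd t * wfun r ts b

def Mmat (r c : ι → Fin 4 → S) (t : ι) : Matrix (Fin 4) (Fin 4) (DualNumber S) :=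
  Matrix.of fun a b => inl (if a = 0 then r t b else 0) + ε * inl (if b = 0 then c t a else 0)

lemma prod_form (r c : ι → Fin 4 → S) (hr : ∀ t, r t 0 = 1) (hc : ∀ t, c t 0 = 0)
    (tl : List ι) : ∀ hd : ι,
    ((hd :: tl).map (Mmat r c)).prod = Matrix.of fun a b =>
      if a = 0 then inl (r (tl.getLastD hd) b) + ε * inl (gfun r c hd tl b)
      else ε * inl (c hd a * wfun r tl b) := by
  induction tl with
  | nil =>
    intro hd
    refine Matrix.ext fun a b => ?_
    simp only [List.map_cons, List.map_nil, List.prod_cons, List.prod_nil, mul_one,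
      List.getLastD_nil, Matrix.of_apply, Mmat, gfun, wfun]
    fin_cases a
    all_goals refine TrivSqZeroExt.ext ?_ ?_
    all_goals
      simp [fst_mul, DualNumber.snd_mul, fst_eps, snd_eps, fst_inl, snd_inl, hr, hc,
        mul_ite, ite_mul]
  | cons t ts ih =>
    intro hd
    refine Matrix.ext fun a b => ?_
    rw [List.map_cons, List.prod_cons, ih t]
    rw [Matrix.mul_apply, Fin.sum_univ_four]
    simp only [Mmat, Matrix.of_apply, List.getLastD_cons, gfun]
    fin_cases a
    all_goals refine TrivSqZeroExt.ext ?_ ?_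
    all_goals
      simp [fst_mul, DualNumber.snd_mul, fst_eps, snd_eps, fst_inl, snd_inl, hr, hc, efun,
        wfun, Fin.sum_univ_four, mul_ite, ite_mul, mul_add, add_mul, mul_assoc]
    all_goals abel

lemma wfun_zero (r : ι → Fin 4 → S) (hr : ∀ t, r t 0 = 1) (tl : List ι) :
    wfun r tl 0 = 1 := by
  cases tl <;> simp [wfun, hr]

lemma getLastD_finRange_map : ∀ (m : ℕ) {ι : Type*} (f : Fin (m+1) → ι) (d : ι),
    (((List.finRange (m+1)).map f).getLastD d) = f (Fin.last m) := by
  intro m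
  induction m with
  | zero => intro ι f d; simp [List.finRange_succ]
  | succ m ih =>
    intro ι f d
    rw [List.finRange_succ, List.map_cons, List.getLastD_cons, List.map_map]
    have := ih (f ∘ Fin.succ) (f 0)
    simp only [Function.comp_def] at this ⊢
    rw [this, ← Fin.succ_last]

lemma gfun_zero_eq (r c : ι → Fin 4 → S) (hr : ∀ t, r t 0 = 1) :
    ∀ (m : ℕ) (f : Fin (m+1) → ι),
    gfun r c (f 0) ((List.finRange m).map fun j => f j.succ) 0 =
      ∑ j : Fin m, efun r c (f j.castSucc) (f j.succ) := by
  intro m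
  induction m with
  | zero => intro f; simp [List.finRange, gfun]
  | succ m ih =>
    intro f
    rw [List.finRange_succ, List.map_cons, List.map_map]
    simp only [gfun, Function.comp_def]
    rw [wfun_zero r hr]
    have := ih (fun j => f j.succ)
    rw [this, Fin.sum_univ_succ]
    simp only [Fin.castSucc_zero, Fin.succ_zero_eq_one, Fin.succ_castSucc, mul_one]
    abel

end MPO

/-- The first-row vector of the MPO tensor. -/
def rv (L : ℕ) (JX JY JZ : ℂ) (i : Fin L) : Fin 4 → Op L :=
  ![1, JX • siteOp L PX i, JY • siteOp L PY i, JZ • siteOp L PZ i]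

/-- The first-column vector of the MPO tensor. -/
def cv (L : ℕ) (i : Fin L) : Fin 4 → Op L :=
  ![0, siteOp L PX i, siteOp L PY i, siteOp L PZ i]

lemma Gamma2_eq_Mmat (L : ℕ) [NeZero L] (JX JY JZ : ℂ) (i : Fin L) :
    Gamma2 L JX JY JZ i = Mmat (rv L JX JY JZ) (cv L) i := by
  refine Matrix.ext fun a b => ?_
  fin_cases a <;> fin_cases b <;>
    simp [Gamma2, Mmat, rv, cv, Matrix.vecHead, Matrix.vecTail]

/-- `Tr_a [Γ₂^1 Γ₂^2 ⋯ Γ₂^L] = I + ε H` for the periodic XYZ chain with `L ≥ 2`. -/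
theorem stmt19 (L : ℕ) [NeZero L] (hL : 2 ≤ L) (JX JY JZ : ℂ) :
    Matrix.trace (List.ofFn fun i : Fin L => Gamma2 L JX JY JZ i).prod =
      inl 1 + ε * inl (Ham L JX JY JZ) := by
  obtain ⟨n, rfl⟩ : ∃ n, L = n + 2 := ⟨L - 2, by omega⟩
  set r := rv (n+2) JX JY JZ with hr_def
  set c := cv (n+2) with hc_def
  have hr : ∀ t, r t 0 = 1 := fun t => rfl
  have hc : ∀ t, c t 0 = 0 := fun t => rfl
  have hlist : (List.ofFn fun i : Fin (n+2) => Gamma2 (n+2) JX JY JZ i) =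
      (((0 : Fin (n+2)) :: (List.finRange (n+1)).map Fin.succ).map (Mmat r c)) := by
    rw [List.ofFn_eq_map, ← List.finRange_succ]
    exact List.map_congr_left fun i _ => Gamma2_eq_Mmat (n+2) JX JY JZ i
  rw [hlist, prod_form r c hr hc]
  -- compute the trace
  rw [Matrix.trace, Fin.sum_univ_four]
  simp only [Matrix.diag_apply, Matrix.of_apply]
  rw [if_pos trivial, if_neg (show (1:Fin 4) ≠ 0 by decide),
    if_neg (show (2:Fin 4) ≠ 0 by decide), if_neg (show (3:Fin 4) ≠ 0 by decide)]
  -- auxiliary facts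
  have hlast0 : (Fin.last (n+1) : Fin (n+2)) ≠ 0 := by
    simp [Fin.ext_iff]
  have hgetLast : ((List.finRange (n+1)).map Fin.succ).getLastD (0 : Fin (n+2)) =
      Fin.last (n+1) := by
    rw [getLastD_finRange_map]
    exact Fin.succ_last n
  have hw : ∀ b, wfun r ((List.finRange (n+1)).map Fin.succ) b = r (Fin.last (n+1)) b := by
    intro b
    rw [List.finRange_succ, List.map_cons, List.map_map]
    simp only [wfun, Function.comp_def]
    rw [← List.getLastD_cons (a := (0 : Fin (n+2)))]
    rw [show (Fin.succ 0 :: List.map (fun j => (j : Fin n).succ.succ) (List.finRange n)) =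
        (List.finRange (n+1)).map Fin.succ by
      rw [List.finRange_succ, List.map_cons, List.map_map]; rfl]
    rw [getLastD_finRange_map, Fin.succ_last]
  have hg : gfun r c (0 : Fin (n+2)) ((List.finRange (n+1)).map Fin.succ) 0 =
      ∑ j : Fin (n+1), efun r c j.castSucc j.succ := by
    have := gfun_zero_eq r c hr (n+1) id
    simpa using this
  have hHam : Ham (n+2) JX JY JZ =
      (∑ j : Fin (n+1), efun r c j.castSucc j.succ) +
      (c 0 1 * r (Fin.last (n+1)) 1 + c 0 2 * r (Fin.last (n+1)) 2 +
        c 0 3 * r (Fin.last (n+1)) 3) := by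
    rw [Ham, Fin.sum_univ_castSucc]
    congr 1
    · refine Finset.sum_congr rfl fun j _ => ?_
      rw [efun, Fin.sum_univ_four, Fin.coeSucc_eq_succ]
      simp [hr_def, hc_def, rv, cv, smul_mul_assoc]
    · rw [Fin.last_add_one]
      rw [siteOp_comm (n+2) PX PX (Fin.last (n+1)) 0 hlast0,
        siteOp_comm (n+2) PY PY (Fin.last (n+1)) 0 hlast0,
        siteOp_comm (n+2) PZ PZ (Fin.last (n+1)) 0 hlast0]
      simp [hr_def, hc_def, rv, cv, mul_smul_comm]
  rw [hgetLast, hw 1, hw 2, hw 3, hg, hr]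
  refine TrivSqZeroExt.ext (by simp [fst_mul, fst_eps]) ?_
  simp only [snd_add, DualNumber.snd_mul, fst_inl, snd_inl, fst_eps, snd_eps, fst_add,
    fst_mul, one_mul, mul_zero, zero_mul, add_zero, zero_add, mul_one]
  rw [hHam]
  abel

end
end
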